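/- arXiv:1102.3707 — 6 statements merged into one kernel-verified Lean document; each statement's English description precedes it below -/
import Mathlib

section
/- For every nonnegative integer k, the integral over (0,∞) of x * (exp(-x/2) * L_k(x))^2 dx equals 2k+1, where L_k is the Laguerre polynomial of degree k and type 0. -/
open Real MeasureTheory Set Finset

/-- The Laguerre polynomial of degree `k` and type 0. -/
noncomputable def laguerreFn (k : ℕ) (x : ℝ) : ℝ :=
  ∑ i ∈ Finset.range (k + 1), (-1 : ℝ) ^ i * (Nat.choose k (k - i)) * x ^ i / (Nat.factorial i)

lemma diff_step (k : ℕ) (p : ℕ → ℝ) :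
    ∑ i ∈ range (k+2), (-1:ℝ)^i * ((k+1).choose i) * p i
      = ∑ i ∈ range (k+1), (-1:ℝ)^i * (k.choose i) * (p i - p (i+1)) := by
  have h1 : ∑ i ∈ range (k+2), (-1:ℝ)^i * ((k+1).choose i) * p i
      = (∑ i ∈ range (k+1), (-1:ℝ)^(i+1) * ((k+1).choose (i+1)) * p (i+1)) + p 0 := by
    rw [Finset.sum_range_succ']; simp
  have h2 : ∑ i ∈ range (k+1), (-1:ℝ)^i * (k.choose i) * p i
      = (∑ i ∈ range k, (-1:ℝ)^(i+1) * (k.choose (i+1)) * p (i+1)) + p 0 := by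
    rw [Finset.sum_range_succ']; simp
  rw [h1]
  have h3 : ∀ i, ((k+1).choose (i+1) : ℝ) = k.choose i + k.choose (i+1) := by
    intro i; rw [Nat.choose_succ_succ]; push_cast; ring
  simp only [h3, mul_sub]
  rw [Finset.sum_sub_distrib, h2]
  have h4 : ∑ i ∈ range (k+1), (-1:ℝ)^(i+1) * (k.choose i + k.choose (i+1)) * p (i+1)
      = ∑ i ∈ range (k+1), ((-1:ℝ)^(i+1) * (k.choose i) * p (i+1)
          + (-1:ℝ)^(i+1) * (k.choose (i+1)) * p (i+1)) := by
    apply Finset.sum_congr rfl; intro i _; ring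
  rw [h4, Finset.sum_add_distrib]
  have h5 : ∑ i ∈ range (k+1), (-1:ℝ)^(i+1) * (k.choose (i+1)) * p (i+1)
      = ∑ i ∈ range k, (-1:ℝ)^(i+1) * (k.choose (i+1)) * p (i+1) := by
    rw [Finset.sum_range_succ]; simp
  rw [h5]
  have h6 : ∀ i ∈ range (k+1), (-1:ℝ)^(i+1) * (k.choose i) * p (i+1)
      = -((-1:ℝ)^i * (k.choose i) * p (i+1)) := by intro i _; ring
  rw [Finset.sum_congr rfl h6, Finset.sum_neg_distrib]
  ring

lemma altsum_choose (k : ℕ) : ∀ m r : ℕ,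
    ∑ i ∈ range (k+1), (-1:ℝ)^i * (k.choose i) * ((m+i).choose r)
      = if k ≤ r then (-1:ℝ)^k * (m.choose (r - k)) else 0 := by
  induction k with
  | zero => intro m r; simp
  | succ k ih =>
    intro m r
    rw [show k+1+1 = k+2 from rfl,
      diff_step k (fun i => (((m+i).choose r : ℕ) : ℝ))]
    rcases r with _ | s
    · simp only [Nat.choose_zero_right, Nat.cast_one, sub_self, mul_zero, Finset.sum_const_zero]
      rw [if_neg (by omega)]
    · have hps : ∀ i : ℕ, (((m+i).choose (s+1) : ℕ) : ℝ) - ((m+(i+1)).choose (s+1) : ℕ)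
          = -(((m+i).choose s : ℕ) : ℝ) := by
        intro i
        have : m + (i+1) = (m+i) + 1 := by ring
        rw [this, Nat.choose_succ_succ']
        push_cast; ring
      have : ∑ i ∈ range (k+1), (-1:ℝ)^i * (k.choose i)
            * ((((m+i).choose (s+1) : ℕ) : ℝ) - ((m+(i+1)).choose (s+1) : ℕ))
          = -∑ i ∈ range (k+1), (-1:ℝ)^i * (k.choose i) * ((m+i).choose s) := by
        rw [← Finset.sum_neg_distrib]
        apply Finset.sum_congr rfl
        intro i _; rw [hps i]; ring
      rw [this, ih m s]
      by_cases h : k ≤ s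
      · rw [if_pos h, if_pos (by omega)]
        have : s + 1 - (k+1) = s - k := by omega
        rw [this]; ring
      · rw [if_neg h, if_neg (by omega)]; simp

lemma key_sum (k : ℕ) :
    ∑ j ∈ range (k+1), ∑ i ∈ range (k+1),
      ((-1:ℝ)^i * (k.choose i) / (Nat.factorial i)) * ((-1:ℝ)^j * (k.choose j) / (Nat.factorial j))
        * (Nat.factorial (i+j+1)) = 2*k+1 := by
  have inner : ∀ j : ℕ,
      ∑ i ∈ range (k+1),
        ((-1:ℝ)^i * (k.choose i) / (Nat.factorial i)) * ((-1:ℝ)^j * (k.choose j) / (Nat.factorial j))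
          * (Nat.factorial (i+j+1))
      = ((-1:ℝ)^j * (k.choose j) * (j+1))
        * (if k ≤ j+1 then (-1:ℝ)^k * ((j+1).choose (j+1-k)) else 0) := by
    intro j
    rw [← altsum_choose k (j+1) (j+1), Finset.mul_sum]
    apply Finset.sum_congr rfl
    intro i _
    have hfac : (Nat.factorial (i+j+1) : ℝ)
        = ((i+j+1).choose i) * (Nat.factorial i) * (Nat.factorial (j+1)) := by
      have h := Nat.choose_mul_factorial_mul_factorial (show i ≤ i+j+1 by omega)
      have h2 : i+j+1-i = j+1 := by omega
      rw [h2] at h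
      rw [← h]; push_cast; ring
    have hsym : (i+j+1).choose i = ((j+1)+i).choose (j+1) := by
      rw [Nat.choose_symm_add]
      congr 1
      omega
    rw [hfac, hsym, Nat.factorial_succ]
    have hi : (Nat.factorial i : ℝ) ≠ 0 := by positivity
    have hj : (Nat.factorial j : ℝ) ≠ 0 := by positivity
    field_simp
    push_cast
    ring
  rw [Finset.sum_congr rfl (fun j _ => inner j)]
  rcases k with _ | K
  · norm_num
  · rw [show K+1+1 = K+2 from rfl, Finset.sum_range_succ, Finset.sum_range_succ]
    have hzero : ∑ j ∈ range K, ((-1:ℝ)^j * ((K+1).choose j) * (j+1))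
        * (if K+1 ≤ j+1 then (-1:ℝ)^(K+1) * ((j+1).choose (j+1-(K+1))) else 0) = 0 := by
      apply Finset.sum_eq_zero
      intro j hj
      rw [Finset.mem_range] at hj
      rw [if_neg (by omega)]
      ring
    rw [hzero, zero_add]
    rw [if_pos (by omega), if_pos (by omega)]
    have e1 : K+1-(K+1) = 0 := by omega
    have e2 : K+1+1-(K+1) = 1 := by omega
    rw [e1, e2]
    simp only [Nat.choose_succ_self_right, Nat.choose_self, Nat.choose_zero_right,
      Nat.choose_one_right]
    have hK : (-1:ℝ)^(K+1) = -((-1:ℝ)^K) := by rw [pow_succ]; ring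
    have ha : (-1:ℝ)^K * (-1:ℝ)^K = 1 := by rw [← mul_pow]; norm_num
    rw [hK]
    push_cast
    generalize (-1:ℝ)^K = a at ha ⊢
    nlinarith [ha]

lemma integrable_pow_exp (n : ℕ) :
    IntegrableOn (fun x : ℝ => x^n * Real.exp (-x)) (Ioi 0) := by
  have h := Real.GammaIntegral_convergent (show (0:ℝ) < n+1 by positivity)
  apply h.congr_fun ?_ measurableSet_Ioi
  intro x hx
  have h1 : x ^ ((n:ℝ)+1-1) = x ^ n := by
    rw [show ((n:ℝ)+1-1) = (n:ℝ) by ring, Real.rpow_natCast]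
  simp only [h1]
  ring

lemma integral_pow_exp (n : ℕ) :
    ∫ x in Ioi (0:ℝ), x^n * Real.exp (-x) = n.factorial := by
  have h := Real.Gamma_eq_integral (show (0:ℝ) < n+1 by positivity)
  rw [Real.Gamma_nat_eq_factorial] at h
  rw [h]
  apply setIntegral_congr_fun measurableSet_Ioi
  intro x hx
  have h1 : x ^ ((n:ℝ)+1-1) = x ^ n := by
    rw [show ((n:ℝ)+1-1) = (n:ℝ) by ring, Real.rpow_natCast]
  simp only [h1]
  ring

theorem stmt1 (k : ℕ) :
    ∫ x in Set.Ioi (0 : ℝ), x * (Real.exp (-x / 2) * laguerreFn k x) ^ 2 = 2 * k + 1 := by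
  have hpt : EqOn (fun x : ℝ => x * (Real.exp (-x / 2) * laguerreFn k x) ^ 2)
      (fun x : ℝ => ∑ j ∈ range (k+1), ∑ i ∈ range (k+1),
        (((-1:ℝ)^i * (k.choose i) / (Nat.factorial i))
          * ((-1:ℝ)^j * (k.choose j) / (Nat.factorial j)))
          * (x^(i+j+1) * Real.exp (-x))) (Ioi 0) := by
    intro x _
    simp only
    have hL : laguerreFn k x
        = ∑ i ∈ range (k+1), (-1:ℝ)^i * (k.choose i) * x^i / (Nat.factorial i) := by
      apply Finset.sum_congr rfl
      intro i hi
      rw [Finset.mem_range] at hi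
      rw [Nat.choose_symm (by omega : i ≤ k)]
    have he : Real.exp (-x/2)^2 = Real.exp (-x) := by
      rw [pow_two, ← Real.exp_add]
      congr 1
      ring
    rw [hL, mul_pow, he, pow_two, Finset.sum_mul_sum]
    simp only [Finset.mul_sum]
    apply Finset.sum_congr rfl
    intro a _
    apply Finset.sum_congr rfl
    intro b _
    rw [pow_succ, pow_add]
    ring
  rw [setIntegral_congr_fun measurableSet_Ioi hpt]
  have hterm : ∀ (c : ℝ) (n : ℕ),
      Integrable (fun x : ℝ => c * (x^n * Real.exp (-x))) (volume.restrict (Ioi 0)) :=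
    fun c n => (integrable_pow_exp n).const_mul c
  rw [MeasureTheory.integral_finset_sum _ (fun j _ =>
    integrable_finset_sum _ (fun i _ => hterm _ _))]
  have hj : ∀ j ∈ range (k+1),
      (∫ x in Ioi (0:ℝ), ∑ i ∈ range (k+1),
        (((-1:ℝ)^i * (k.choose i) / (Nat.factorial i))
          * ((-1:ℝ)^j * (k.choose j) / (Nat.factorial j)))
          * (x^(i+j+1) * Real.exp (-x)))
      = ∑ i ∈ range (k+1),
        (((-1:ℝ)^i * (k.choose i) / (Nat.factorial i))
          * ((-1:ℝ)^j * (k.choose j) / (Nat.factorial j)))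
          * (Nat.factorial (i+j+1)) := by
    intro j _
    rw [MeasureTheory.integral_finset_sum _ (fun i _ => hterm _ _)]
    apply Finset.sum_congr rfl
    intro i _
    rw [MeasureTheory.integral_const_mul, integral_pow_exp]
  rw [Finset.sum_congr rfl hj]
  exact key_sum k
end

section
/- For every nonnegative integer k ≥ 1, the double sum S(k) = ∑_{i=0}^{k} ∑_{j=0}^{k-1} (-1)^{i+j} * C(k,i) * C(k,j+1) * C(i+j,i) equals 0. -/
open Finset

/-- `x ↦ C(x+j, j)` as a ℤ-valued function equals a combination of `x ↦ C(x, m)`, `m ≤ j`. -/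
lemma shift_choose_eq (j : ℕ) :
    (fun x : ℕ => ((x + j).choose j : ℤ)) =
      fun x => ∑ p ∈ range (j + 1), (j.choose (j - p) : ℤ) * (x.choose p : ℤ) := by
  funext x
  rw [Nat.add_choose_eq x j j]
  rw [Finset.Nat.sum_antidiagonal_eq_sum_range_succ (fun a b => x.choose a * j.choose b)]
  push_cast
  exact Finset.sum_congr rfl fun p hp => by ring

lemma fwdDiff_iter_shift_choose_zero (k j : ℕ) (h : j < k) :
    (fwdDiff (1:ℕ))^[k] (fun x : ℕ => ((x + j).choose j : ℤ)) 0 = 0 := by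
  rw [shift_choose_eq j]
  have : (fun x : ℕ => ∑ p ∈ range (j + 1), (j.choose (j - p) : ℤ) * (x.choose p : ℤ))
      = ∑ p ∈ range (j + 1), (j.choose (j - p) : ℤ) • (fun x : ℕ => (x.choose p : ℤ)) := by
    funext x
    simp [Finset.sum_apply]
  rw [this, fwdDiff_iter_finset_sum]
  rw [Finset.sum_apply]
  apply Finset.sum_eq_zero
  intro p hp
  have hpk : k ≠ p := by
    have := Finset.mem_range.mp hp
    omega
  have := fwdDiff_iter_const_smul (1 : ℕ) (j.choose (j - p) : ℤ)
    (fun x : ℕ => (x.choose p : ℤ)) k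
  rw [this]
  simp [fwdDiff_iter_choose_zero, hpk]

lemma inner_sum_eq_zero (k j : ℕ) (h : j < k) :
    ∑ i ∈ range (k + 1), (-1 : ℤ) ^ i * (Nat.choose k i) * (Nat.choose (i + j) i) = 0 := by
  have key := fwdDiff_iter_eq_sum_shift (1 : ℕ) (fun x : ℕ => ((x + j).choose j : ℤ)) k 0
  rw [fwdDiff_iter_shift_choose_zero k j h] at key
  have : ∑ i ∈ range (k + 1), (-1 : ℤ) ^ i * (Nat.choose k i) * (Nat.choose (i + j) i)
      = (-1 : ℤ) ^ k * ∑ i ∈ range (k + 1),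
          ((-1 : ℤ) ^ (k - i) * (k.choose i : ℤ)) • (((0 + i • 1 + j).choose j : ℤ)) := by
    rw [Finset.mul_sum]
    apply Finset.sum_congr rfl
    intro i hi
    have hik : i ≤ k := by have := Finset.mem_range.mp hi; omega
    have hsign : (-1 : ℤ) ^ k * (-1 : ℤ) ^ (k - i) = (-1 : ℤ) ^ i := by
      rw [← pow_add]
      have : k + (k - i) = 2 * (k - i) + i := by omega
      rw [this, pow_add, pow_mul]
      simp
    have hch : (i + j).choose i = (0 + i • 1 + j).choose j := by
      simp only [zero_add, smul_eq_mul, mul_one]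
      rw [← Nat.choose_symm (Nat.le_add_left j i), Nat.add_sub_cancel]
    rw [smul_eq_mul, ← mul_assoc, ← mul_assoc, hsign, hch]
  rw [this, ← key, mul_zero]

theorem stmt3 (k : ℕ) (hk : 1 ≤ k) :
    ∑ i ∈ Finset.range (k + 1), ∑ j ∈ Finset.range k,
      (-1 : ℤ) ^ (i + j) * (Nat.choose k i) * (Nat.choose k (j + 1)) *
        (Nat.choose (i + j) i) = 0 := by
  rw [Finset.sum_comm]
  apply Finset.sum_eq_zero
  intro j hj
  have hjk : j < k := Finset.mem_range.mp hj
  have : ∑ i ∈ range (k + 1),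
      (-1 : ℤ) ^ (i + j) * (Nat.choose k i) * (Nat.choose k (j + 1)) * (Nat.choose (i + j) i)
      = ((-1 : ℤ) ^ j * (Nat.choose k (j + 1))) *
        ∑ i ∈ range (k + 1), (-1 : ℤ) ^ i * (Nat.choose k i) * (Nat.choose (i + j) i) := by
    rw [Finset.mul_sum]
    apply Finset.sum_congr rfl
    intro i hi
    rw [pow_add]
    ring
  rw [this, inner_sum_eq_zero k j hjk, mul_zero]
end

section
/- For all nonnegative integers n and all real α ≥ -1/2 and x ≥ 0, the generalized Laguerre polynomial satisfies |L_n^{(α)}(x)| ≤ ∑_{i=0}^{n} ((α+1)_{n-i} / (n-i)!) * x^i / i! , i.e. |L_n^{(α)}(x)| ≤ ((α+1)_n / n!) * σ_n^{(α)}(e^x) where σ_n^{(α)} denotes the Cesàro mean of the exponential series. -/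
/-- The generalized Laguerre polynomial of degree `n` and type `α`:
`L_n^{(α)}(x) = ∑_{i=0}^{n} (-1)^i C(n+α, n-i) x^i / i!`. -/
noncomputable def genLaguerre (α : ℝ) (n : ℕ) (x : ℝ) : ℝ :=
  ∑ i ∈ Finset.range (n + 1),
    (-1 : ℝ) ^ i * (Real.Gamma (n + α + 1) /
      (Real.Gamma (α + i + 1) * (Nat.factorial (n - i)))) * x ^ i / (Nat.factorial i)

section AuxLemmas
open Finset MeasureTheory Real

noncomputable def poch (a : ℝ) (m : ℕ) : ℝ := (ascPochhammer ℝ m).eval a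

lemma poch_zero (a : ℝ) : poch a 0 = 1 := by simp [poch]

lemma poch_succ (a : ℝ) (m : ℕ) : poch a (m+1) = poch a m * (a + m) := by
  simp [poch, ascPochhammer_succ_eval]

lemma vandermonde (a b : ℝ) (N : ℕ) :
    ∑ m ∈ range (N+1), (N.choose m : ℝ) * poch a m * poch b (N-m) = poch (a+b) N := by
  induction N with
  | zero => simp [poch_zero]
  | succ N ih =>
    have expand : ∑ m ∈ range (N+1+1), ((N+1).choose m : ℝ) * poch a m * poch b (N+1-m)
        = ∑ m ∈ range (N+1), ((N.choose m : ℝ) * poch a m * poch b (N+1-m)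
            + (N.choose m : ℝ) * poch a (m+1) * poch b (N-m)) := by
      rw [Finset.sum_range_succ'
        (fun m => ((N+1).choose m : ℝ) * poch a m * poch b (N+1-m)) (N+1)]
      rw [sum_add_distrib, Finset.sum_range_succ'
        (fun m => ((N.choose m : ℝ) * poch a m * poch b (N+1-m))) N]
      have hext : ∑ j ∈ range (N+1), (N.choose (j+1) : ℝ) * poch a (j+1) * poch b (N+1-(j+1))
          = ∑ j ∈ range N, (N.choose (j+1) : ℝ) * poch a (j+1) * poch b (N+1-(j+1)) := by
        rw [Finset.sum_range_succ]; simp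
      rw [← hext, add_right_comm, ← Finset.sum_add_distrib]
      congr 1
      · refine Finset.sum_congr rfl fun j hj => ?_
        have h1 : N + 1 - (j+1) = N - j := by omega
        rw [h1, Nat.choose_succ_succ, Nat.cast_add]; ring
      · norm_num
    rw [expand, poch_succ, ← ih, Finset.sum_mul]
    refine Finset.sum_congr rfl fun m hm => ?_
    have hm' : m ≤ N := Nat.lt_succ_iff.mp (Finset.mem_range.mp hm)
    rw [show N + 1 - m = (N - m) + 1 from by omega, poch_succ, poch_succ]
    have hc : ((N - m : ℕ) : ℝ) = (N : ℝ) - m := by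
      rw [Nat.cast_sub hm']
    rw [hc]; push_cast; ring

lemma poch_nonneg {a : ℝ} (ha : 0 ≤ a) (m : ℕ) : 0 ≤ poch a m := by
  induction m with
  | zero => simp [poch_zero]
  | succ m ih => rw [poch_succ]; positivity

lemma gamma_poch {a : ℝ} (ha : 0 < a) (m : ℕ) :
    Real.Gamma (a + m) = poch a m * Real.Gamma a := by
  induction m with
  | zero => simp [poch_zero]
  | succ m ih =>
    have h : a + (m+1 : ℕ) = (a + m) + 1 := by push_cast; ring
    rw [h, Real.Gamma_add_one (by positivity), ih, poch_succ]; ring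

lemma vandermonde' (a b : ℝ) (N : ℕ) :
    ∑ m ∈ range (N+1), poch a m / (Nat.factorial m) * (poch b (N-m) / (Nat.factorial (N-m)))
      = poch (a+b) N / (Nat.factorial N) := by
  rw [eq_div_iff (by positivity : (Nat.factorial N : ℝ) ≠ 0), Finset.sum_mul, ← vandermonde a b N]
  refine Finset.sum_congr rfl fun m hm => ?_
  have hm' : m ≤ N := Nat.lt_succ_iff.mp (Finset.mem_range.mp hm)
  rw [Nat.cast_choose ℝ hm']
  have h1 : (Nat.factorial m : ℝ) ≠ 0 := by positivity
  have h2 : (Nat.factorial (N-m) : ℝ) ≠ 0 := by positivity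
  field_simp

lemma poch_half (j : ℕ) :
    (4:ℝ)^j * (Nat.factorial j) * poch (1/2) j = Nat.factorial (2*j) := by
  induction j with
  | zero => simp [poch_zero]
  | succ j ih =>
    rw [poch_succ]
    have h2 : 2*(j+1) = (2*j+1)+1 := by ring
    rw [h2, Nat.factorial_succ (2*j+1), Nat.factorial_succ (2*j), Nat.factorial_succ j]
    push_cast
    linear_combination (4*((j:ℝ)+1)*(1/2+j)) * ih

lemma integrable_pow_gauss (m : ℕ) :
    Integrable (fun t : ℝ => t^m * Real.exp (-t^2)) := by
  have h := integrable_rpow_mul_exp_neg_mul_sq (b := 1) one_pos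
    (s := (m:ℝ)) (lt_of_lt_of_le neg_one_lt_zero (Nat.cast_nonneg m))
  simpa [Real.rpow_natCast, neg_one_mul] using h

lemma integral_moment (j : ℕ) :
    ∫ t : ℝ, t^(2*j) * Real.exp (-t^2) = Real.Gamma (j + 1/2) := by
  have h1 : ∫ x in Set.Ioi (0:ℝ), x ^ (2*j) * rexp (-x^2) = 1/2 * Gamma (j + 1/2) := by
    have h := integral_rpow_mul_exp_neg_rpow (p := 2) (q := ((2*j:ℕ):ℝ)) two_pos
      (lt_of_lt_of_le neg_one_lt_zero (Nat.cast_nonneg _))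
    have he : (((2*j:ℕ):ℝ) + 1)/2 = (j:ℝ) + 1/2 := by push_cast; ring
    rw [he] at h
    calc ∫ x in Set.Ioi (0:ℝ), x ^ (2*j) * rexp (-x^2)
        = ∫ x in Set.Ioi (0:ℝ), x ^ (((2*j:ℕ)):ℝ) * rexp (-x ^ (2:ℝ)) := by
          refine setIntegral_congr_fun measurableSet_Ioi (fun x hx => ?_)
          rw [Real.rpow_natCast, show (2:ℝ) = ((2:ℕ):ℝ) by norm_num, Real.rpow_natCast]
      _ = 1/2 * Gamma ((j:ℝ)+1/2) := by rw [h]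
  have h2 := integral_comp_abs (f := fun u : ℝ => u^(2*j) * rexp (-u^2))
  simp only [pow_mul, sq_abs] at h2 h1 ⊢
  rw [h2, h1]; ring

lemma I_pow_even (i : ℕ) : (Complex.I ^ (2*i)).re = (-1:ℝ)^i := by
  rw [pow_mul, Complex.I_sq]
  have h : ((-1:ℂ))^i = (((-1:ℝ)^i : ℝ) : ℂ) := by push_cast; ring
  rw [h, Complex.ofReal_re]

lemma I_pow_odd (m : ℕ) (hm : Odd m) : (Complex.I ^ m).re = 0 := by
  obtain ⟨j, rfl⟩ := hm
  have h : Complex.I ^ (2*j+1) = (((-1:ℝ)^j : ℝ):ℂ) * Complex.I := by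
    rw [pow_add, pow_mul, Complex.I_sq, pow_one]; push_cast; ring
  rw [h]
  simp only [Complex.mul_re, Complex.ofReal_re, Complex.ofReal_im, Complex.I_re, Complex.I_im]
  ring

lemma sum_even (f : ℕ → ℝ) (k : ℕ) (h : ∀ m, Odd m → f m = 0) :
    ∑ m ∈ range (2*k+1), f m = ∑ i ∈ range (k+1), f (2*i) := by
  induction k with
  | zero => simp
  | succ k ih =>
    have h1 : 2*(k+1)+1 = (2*k+1) + 1 + 1 := by ring
    rw [h1, Finset.sum_range_succ, Finset.sum_range_succ, ih,
      h (2*k+1) ⟨k, by ring⟩]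
    conv_rhs => rw [Finset.sum_range_succ]
    have h2 : 2*k+1+1 = 2*(k+1) := by ring
    rw [h2]; ring

lemma G1 (k i : ℕ) (h : i ≤ k) :
    ((2*k).choose (2*i) : ℝ) * Real.Gamma ((i:ℝ)+1/2)
      * (Real.Gamma (((k-i:ℕ):ℝ)+1/2) * (Nat.factorial i) * (Nat.factorial (k-i)))
    = Real.sqrt π * (Nat.factorial k) * Real.Gamma ((k:ℝ)+1/2) := by
  have hg : ∀ j:ℕ, Real.Gamma ((j:ℝ)+1/2) = poch (1/2) j * Real.sqrt π := by
    intro j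
    rw [show ((j:ℝ)+1/2) = 1/2 + j by ring, gamma_poch one_half_pos, Real.Gamma_one_half_eq]
  have hc : ((2*k).choose (2*i):ℝ) * (Nat.factorial (2*i)) * (Nat.factorial (2*(k-i)))
      = (Nat.factorial (2*k)) := by
    have hn := Nat.choose_mul_factorial_mul_factorial (show 2*i ≤ 2*k by omega)
    rw [show 2*k - 2*i = 2*(k-i) by omega] at hn
    exact_mod_cast congrArg (Nat.cast (R := ℝ)) hn
  have key : ((2*k).choose (2*i):ℝ) * poch (1/2) i * poch (1/2) (k-i)
      * (Nat.factorial i) * (Nat.factorial (k-i)) = (Nat.factorial k) * poch (1/2) k := by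
    have h1 := poch_half i
    have h2 := poch_half (k-i)
    have h3 := poch_half k
    have h4 : ((4:ℝ)^k) ≠ 0 := by positivity
    apply mul_left_cancel₀ h4
    calc (4:ℝ)^k * (((2*k).choose (2*i):ℝ) * poch (1/2) i * poch (1/2) (k-i)
          * (Nat.factorial i) * (Nat.factorial (k-i)))
        = ((2*k).choose (2*i):ℝ) * ((4:ℝ)^i * (Nat.factorial i) * poch (1/2) i)
          * ((4:ℝ)^(k-i) * (Nat.factorial (k-i)) * poch (1/2) (k-i)) := by
          rw [show (4:ℝ)^k = 4^i * 4^(k-i) from by rw [← pow_add]; congr 1; omega]; ring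
      _ = ((2*k).choose (2*i):ℝ) * (Nat.factorial (2*i)) * (Nat.factorial (2*(k-i))) := by
          rw [h1, h2]
      _ = (Nat.factorial (2*k)) := hc
      _ = (4:ℝ)^k * ((Nat.factorial k) * poch (1/2) k) := by rw [← h3]; ring
  rw [hg i, hg (k-i), hg k]
  have hpi : Real.sqrt π * Real.sqrt π = π := Real.mul_self_sqrt Real.pi_nonneg
  nlinarith [key, hpi]

lemma base (k : ℕ) (y : ℝ) :
    |genLaguerre (-1/2) k (y^2)| ≤
      ∑ i ∈ range (k+1), poch (1/2) (k-i) / (Nat.factorial (k-i)) * (y^2)^i / (Nat.factorial i) := by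
  have hre : ∀ t:ℝ, (((y:ℂ) + t*Complex.I)^(2*k)).re * Real.exp (-t^2)
      = ∑ m ∈ range (2*k+1),
        ((Complex.I^m).re * y^(2*k-m) * ((2*k).choose m)) * (t^m * Real.exp (-t^2)) := by
    intro t
    have hbin : ((y:ℂ) + t*Complex.I)^(2*k)
        = ∑ m ∈ range (2*k+1), ((t:ℂ)*Complex.I)^m * (y:ℂ)^(2*k-m) * ((2*k).choose m) := by
      rw [show ((y:ℂ) + t*Complex.I) = ((t:ℂ)*Complex.I + (y:ℂ)) from by ring, add_pow]
    rw [hbin, Complex.re_sum, Finset.sum_mul]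
    refine Finset.sum_congr rfl fun m hm => ?_
    have hterm : ((t:ℂ)*Complex.I)^m * (y:ℂ)^(2*k-m) * ((2*k).choose m)
        = ((t^m * y^(2*k-m) * ((2*k).choose m) : ℝ) : ℂ) * Complex.I^m := by
      push_cast; ring
    rw [hterm, Complex.re_ofReal_mul]
    ring
  have hfun : (fun t:ℝ => (((y:ℂ) + t*Complex.I)^(2*k)).re * Real.exp (-t^2))
      = fun t => ∑ m ∈ range (2*k+1),
        ((Complex.I^m).re * y^(2*k-m) * ((2*k).choose m)) * (t^m * Real.exp (-t^2)) :=
    funext hre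
  have hint1 : Integrable (fun t:ℝ => (((y:ℂ) + t*Complex.I)^(2*k)).re * Real.exp (-t^2)) := by
    rw [hfun]
    exact integrable_finset_sum _ (fun m _ => (integrable_pow_gauss m).const_mul _)
  have hval1 : ∫ t:ℝ, (((y:ℂ) + t*Complex.I)^(2*k)).re * Real.exp (-t^2)
      = (-1:ℝ)^k * (Real.sqrt π * (Nat.factorial k)) * genLaguerre (-1/2) k (y^2) := by
    rw [hfun, integral_finset_sum _ (fun m _ => (integrable_pow_gauss m).const_mul _)]
    have hmom : ∀ m ∈ range (2*k+1),
        (∫ t:ℝ, ((Complex.I^m).re * y^(2*k-m) * ((2*k).choose m)) * (t^m * Real.exp (-t^2)))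
        = ((Complex.I^m).re * y^(2*k-m) * ((2*k).choose m)) * ∫ t:ℝ, t^m * Real.exp (-t^2) :=
      fun m _ => MeasureTheory.integral_const_mul _ _
    rw [Finset.sum_congr rfl hmom]
    rw [sum_even _ k (fun m hm => by rw [I_pow_odd m hm]; ring)]
    have hL : genLaguerre (-1/2) k (y^2) = ∑ i ∈ range (k+1),
        (-1:ℝ)^i * (Real.Gamma ((k:ℝ)+1/2) / (Real.Gamma ((i:ℝ)+1/2) * (Nat.factorial (k-i))))
          * (y^2)^i / (Nat.factorial i) := by
      unfold genLaguerre
      refine Finset.sum_congr rfl fun i hi => ?_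
      rw [show (k:ℝ) + (-1/2) + 1 = (k:ℝ)+1/2 by ring, show (-1/2:ℝ) + i + 1 = (i:ℝ)+1/2 by ring]
    rw [hL, Finset.mul_sum, ← Finset.sum_range_reflect]
    refine Finset.sum_congr rfl fun j hj => ?_
    have hj' : j ≤ k := Nat.lt_succ_iff.mp (Finset.mem_range.mp hj)
    rw [show k + 1 - 1 - j = k - j from by omega]
    rw [I_pow_even, integral_moment]
    have hG := G1 k (k-j) (Nat.sub_le k j)
    rw [show k - (k-j) = j from by omega] at hG
    have hΓ1 : 0 < Real.Gamma (((k-j:ℕ):ℝ)+1/2) := Real.Gamma_pos_of_pos (by positivity)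
    have hΓ2 : 0 < Real.Gamma ((j:ℝ)+1/2) := Real.Gamma_pos_of_pos (by positivity)
    have hsign : ((-1:ℝ))^(k-j) * (-1)^j = (-1)^k := by
      rw [← pow_add]; congr 1; omega
    have hy : y^(2*k-2*(k-j)) = (y^2)^j := by
      rw [← pow_mul]; congr 1; omega
    have hf1 : (0:ℝ) < (Nat.factorial j) := by positivity
    have hf2 : (0:ℝ) < (Nat.factorial (k-j)) := by positivity
    rw [hy]
    have hone : ((-1:ℝ))^j * (-1)^j = 1 := by
      rw [← pow_add, show j + j = 2*j from by ring, pow_mul]; norm_num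
    field_simp
    have e1 : ((((k-j:ℕ):ℝ) * 2 + 1) / 2) = ((k-j:ℕ):ℝ) + 1/2 := by ring
    have e2 : ((2 * (j:ℝ) + 1) / 2) = (j:ℝ) + 1/2 := by ring
    have e3 : ((2 * (k:ℝ) + 1) / 2) = (k:ℝ) + 1/2 := by ring
    rw [e1, e2, e3]
    linear_combination ((-1:ℝ))^(k-j) * (y^2)^j * hG
      + ((-1:ℝ))^j * (Real.sqrt π * (Nat.factorial k) * Real.Gamma ((k:ℝ)+1/2) * (y^2)^j) * hsign
      - ((-1:ℝ))^(k-j) * (Real.sqrt π * (Nat.factorial k) * Real.Gamma ((k:ℝ)+1/2) * (y^2)^j) * hone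
  have hfun2 : (fun t:ℝ => (y^2+t^2)^k * Real.exp (-t^2))
      = fun t => ∑ m ∈ range (k+1), ((y^2)^(k-m) * (k.choose m)) * (t^(2*m) * Real.exp (-t^2)) := by
    funext t
    rw [show (y^2+t^2 : ℝ) = (t^2 + y^2) from by ring, add_pow, Finset.sum_mul]
    refine Finset.sum_congr rfl fun m hm => ?_
    rw [pow_mul]
    ring
  have hint2 : Integrable (fun t:ℝ => (y^2+t^2)^k * Real.exp (-t^2)) := by
    rw [hfun2]
    exact integrable_finset_sum _ (fun m _ => (integrable_pow_gauss (2*m)).const_mul _)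
  have hval2 : ∫ t:ℝ, (y^2+t^2)^k * Real.exp (-t^2)
      = (Real.sqrt π * (Nat.factorial k))
        * ∑ i ∈ range (k+1), poch (1/2) (k-i) / (Nat.factorial (k-i)) * (y^2)^i
          / (Nat.factorial i) := by
    rw [hfun2, integral_finset_sum _ (fun m _ => (integrable_pow_gauss (2*m)).const_mul _)]
    rw [Finset.sum_congr rfl (fun m (_ : m ∈ range (k+1)) =>
      MeasureTheory.integral_const_mul ((y^2)^(k-m) * ((k.choose m : ℕ) : ℝ)) _)]
    rw [Finset.mul_sum, ← Finset.sum_range_reflect]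
    refine Finset.sum_congr rfl fun m hm => ?_
    have hm' : m ≤ k := Nat.lt_succ_iff.mp (Finset.mem_range.mp hm)
    rw [show k + 1 - 1 - m = k - m from by omega, integral_moment,
      show k - (k-m) = m from by omega]
    rw [show ((k-m:ℕ):ℝ)+1/2 = 1/2 + ((k-m:ℕ):ℝ) from by ring, gamma_poch one_half_pos,
      Real.Gamma_one_half_eq, Nat.cast_choose ℝ (Nat.sub_le k m),
      show k - (k-m) = m from by omega]
    have hf1 : ((Nat.factorial m:ℕ):ℝ) ≠ 0 := by positivity
    have hf2 : ((Nat.factorial (k-m):ℕ):ℝ) ≠ 0 := by positivity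
    field_simp
  have hpt : ∀ t:ℝ, |(((y:ℂ)+t*Complex.I)^(2*k)).re| ≤ (y^2+t^2)^k := by
    intro t
    calc |(((y:ℂ)+t*Complex.I)^(2*k)).re| ≤ ‖((y:ℂ)+t*Complex.I)^(2*k)‖ :=
          Complex.abs_re_le_norm _
    _ = (‖(y:ℂ)+t*Complex.I‖)^(2*k) := by rw [norm_pow]
    _ = (y^2+t^2)^k := by rw [pow_mul, Complex.sq_norm, Complex.normSq_add_mul_I]
  have gpos : (0:ℝ) < Real.sqrt π * (Nat.factorial k) := by
    have h := Real.pi_pos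
    positivity
  rw [← mul_le_mul_iff_right₀ gpos]
  calc (Real.sqrt π * (Nat.factorial k)) * |genLaguerre (-1/2) k (y^2)|
      = |(-1:ℝ)^k * (Real.sqrt π * (Nat.factorial k)) * genLaguerre (-1/2) k (y^2)| := by
        rw [abs_mul, abs_mul, abs_pow, abs_neg, abs_one, one_pow, one_mul,
          abs_of_pos gpos]
    _ = |∫ t:ℝ, (((y:ℂ) + t*Complex.I)^(2*k)).re * Real.exp (-t^2)| := by rw [hval1]
    _ ≤ ∫ t:ℝ, |(((y:ℂ) + t*Complex.I)^(2*k)).re| * Real.exp (-t^2) := by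
        simpa [Real.norm_eq_abs] using norm_integral_le_integral_norm
          (fun t:ℝ => (((y:ℂ) + t*Complex.I)^(2*k)).re * Real.exp (-t^2))
    _ ≤ ∫ t:ℝ, (y^2+t^2)^k * Real.exp (-t^2) := by
        have hint1' : Integrable (fun t:ℝ => |(((y:ℂ) + t*Complex.I)^(2*k)).re| * Real.exp (-t^2)) := by
          have h := hint1.abs
          simpa [abs_mul, abs_of_pos (Real.exp_pos _)] using h
        refine integral_mono hint1' hint2 fun t => ?_
        exact mul_le_mul_of_nonneg_right (hpt t) (Real.exp_pos _).le
    _ = (Real.sqrt π * (Nat.factorial k))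
        * ∑ i ∈ range (k+1), poch (1/2) (k-i) / (Nat.factorial (k-i)) * (y^2)^i
          / (Nat.factorial i) := hval2

lemma sum_triangle (n : ℕ) (F : ℕ → ℕ → ℝ) :
    ∑ k ∈ range (n+1), ∑ i ∈ range (k+1), F k i
      = ∑ i ∈ range (n+1), ∑ m ∈ range (n+1-i), F (i+m) i := by
  calc ∑ k ∈ range (n+1), ∑ i ∈ range (k+1), F k i
      = ∑ k ∈ Finset.Ico 0 (n+1), ∑ i ∈ Finset.Ico 0 (k+1), F k i := by
        simp only [Finset.range_eq_Ico]
    _ = ∑ i ∈ Finset.Ico 0 (n+1), ∑ k ∈ Finset.Ico i (n+1), F k i :=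
        (Finset.sum_Ico_Ico_comm 0 (n+1) fun i j => F j i).symm
    _ = ∑ i ∈ range (n+1), ∑ m ∈ range (n+1-i), F (i+m) i := by
        rw [← Finset.range_eq_Ico]
        exact Finset.sum_congr rfl fun i _ => Finset.sum_Ico_eq_sum_range _ _ _

lemma coeff_sum (α : ℝ) (hα : -1/2 ≤ α) (n i : ℕ) (hi : i ≤ n) :
    ∑ m ∈ range (n+1-i), poch (α+1/2) (n-(i+m)) / (Nat.factorial (n-(i+m)))
        * (Real.Gamma (((i+m:ℕ):ℝ) + (-1/2) + 1)
          / (Real.Gamma ((-1/2) + (i:ℝ) + 1) * (Nat.factorial (i+m-i))))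
      = Real.Gamma ((n:ℝ) + α + 1) / (Real.Gamma (α + (i:ℝ) + 1) * (Nat.factorial (n-i))) := by
  have hipos : (0:ℝ) < (i:ℝ) + 1/2 := by positivity
  have haipos : (0:ℝ) < α + (i:ℝ) + 1 := by
    have : (0:ℝ) ≤ (i:ℝ) := Nat.cast_nonneg i
    linarith
  have hΓi : Real.Gamma ((-1/2) + (i:ℝ) + 1) = Real.Gamma ((i:ℝ) + 1/2) := by
    congr 1; ring
  have hnum : ∀ m : ℕ, Real.Gamma (((i+m:ℕ):ℝ) + (-1/2) + 1)
      = poch ((i:ℝ)+1/2) m * Real.Gamma ((i:ℝ) + 1/2) := by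
    intro m
    rw [show ((i+m:ℕ):ℝ) + (-1/2) + 1 = ((i:ℝ)+1/2) + (m:ℕ) from by push_cast; ring]
    exact gamma_poch hipos m
  have hbig : Real.Gamma ((n:ℝ) + α + 1)
      = poch (α+(i:ℝ)+1) (n-i) * Real.Gamma (α+(i:ℝ)+1) := by
    rw [show (n:ℝ) + α + 1 = (α+(i:ℝ)+1) + ((n-i:ℕ):ℝ) from by rw [Nat.cast_sub hi]; ring]
    exact gamma_poch haipos _
  have hΓine : Real.Gamma ((i:ℝ) + 1/2) ≠ 0 := ne_of_gt (Real.Gamma_pos_of_pos hipos)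
  have hΓane : Real.Gamma (α+(i:ℝ)+1) ≠ 0 := ne_of_gt (Real.Gamma_pos_of_pos haipos)
  calc ∑ m ∈ range (n+1-i), poch (α+1/2) (n-(i+m)) / (Nat.factorial (n-(i+m)))
        * (Real.Gamma (((i+m:ℕ):ℝ) + (-1/2) + 1)
          / (Real.Gamma ((-1/2) + (i:ℝ) + 1) * (Nat.factorial (i+m-i))))
      = ∑ m ∈ range ((n-i)+1), poch ((i:ℝ)+1/2) m / (Nat.factorial m)
          * (poch (α+1/2) ((n-i)-m) / (Nat.factorial ((n-i)-m))) := by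
        rw [show n+1-i = (n-i)+1 from by omega]
        refine Finset.sum_congr rfl fun m hm => ?_
        rw [hnum m, hΓi, show i+m-i = m from by omega, show n-(i+m) = (n-i)-m from by omega]
        field_simp
    _ = poch ((i:ℝ)+1/2 + (α+1/2)) (n-i) / (Nat.factorial (n-i)) := vandermonde' _ _ _
    _ = Real.Gamma ((n:ℝ) + α + 1) / (Real.Gamma (α + (i:ℝ) + 1) * (Nat.factorial (n-i))) := by
        rw [hbig, show (i:ℝ)+1/2+(α+1/2) = α+(i:ℝ)+1 from by ring]
        field_simp

lemma connection (α : ℝ) (hα : -1/2 ≤ α) (n : ℕ) (x : ℝ) :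
    genLaguerre α n x = ∑ k ∈ range (n+1),
      poch (α+1/2) (n-k) / (Nat.factorial (n-k)) * genLaguerre (-1/2) k x := by
  unfold genLaguerre
  simp_rw [Finset.mul_sum]
  rw [sum_triangle n (fun k i => poch (α+1/2) (n-k) / (Nat.factorial (n-k))
    * ((-1:ℝ)^i * (Real.Gamma ((k:ℝ) + (-1/2) + 1)
      / (Real.Gamma ((-1/2) + (i:ℝ) + 1) * (Nat.factorial (k-i)))) * x^i / (Nat.factorial i)))]
  refine Finset.sum_congr rfl fun i hi => ?_
  have hi' : i ≤ n := Nat.lt_succ_iff.mp (Finset.mem_range.mp hi)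
  have hstep : ∑ m ∈ range (n+1-i), poch (α+1/2) (n-(i+m)) / (Nat.factorial (n-(i+m)))
      * ((-1:ℝ)^i * (Real.Gamma (((i+m:ℕ):ℝ) + (-1/2) + 1)
        / (Real.Gamma ((-1/2) + (i:ℝ) + 1) * (Nat.factorial (i+m-i)))) * x^i / (Nat.factorial i))
      = (∑ m ∈ range (n+1-i), poch (α+1/2) (n-(i+m)) / (Nat.factorial (n-(i+m)))
        * (Real.Gamma (((i+m:ℕ):ℝ) + (-1/2) + 1)
          / (Real.Gamma ((-1/2) + (i:ℝ) + 1) * (Nat.factorial (i+m-i)))))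
        * ((-1:ℝ)^i * x^i / (Nat.factorial i)) := by
    rw [Finset.sum_mul]
    exact Finset.sum_congr rfl fun m _ => by ring
  rw [hstep, coeff_sum α hα n i hi']
  ring

lemma rhs_identity (α : ℝ) (hα : -1/2 ≤ α) (n : ℕ) (x : ℝ) :
    ∑ i ∈ range (n+1), (Real.Gamma (α + 1 + ((n-i:ℕ):ℝ)) / Real.Gamma (α+1))
        / (Nat.factorial (n-i)) * x^i / (Nat.factorial i)
      = ∑ k ∈ range (n+1), poch (α+1/2) (n-k) / (Nat.factorial (n-k))
        * ∑ i ∈ range (k+1), poch (1/2) (k-i) / (Nat.factorial (k-i)) * x^i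
          / (Nat.factorial i) := by
  simp_rw [Finset.mul_sum]
  rw [sum_triangle n (fun k i => poch (α+1/2) (n-k) / (Nat.factorial (n-k))
    * (poch (1/2) (k-i) / (Nat.factorial (k-i)) * x^i / (Nat.factorial i)))]
  refine Finset.sum_congr rfl fun i hi => ?_
  have hi' : i ≤ n := Nat.lt_succ_iff.mp (Finset.mem_range.mp hi)
  have hstep : ∑ m ∈ range (n+1-i), poch (α+1/2) (n-(i+m)) / (Nat.factorial (n-(i+m)))
        * (poch (1/2) ((i+m)-i) / (Nat.factorial ((i+m)-i)) * x^i / (Nat.factorial i))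
      = (∑ m ∈ range ((n-i)+1), poch (1/2) m / (Nat.factorial m)
          * (poch (α+1/2) ((n-i)-m) / (Nat.factorial ((n-i)-m)))) * (x^i / (Nat.factorial i)) := by
    rw [show n+1-i = (n-i)+1 from by omega, Finset.sum_mul]
    refine Finset.sum_congr rfl fun m hm => ?_
    rw [show (i+m)-i = m from by omega, show n-(i+m) = (n-i)-m from by omega]
    ring
  rw [hstep, vandermonde' (1/2) (α+1/2) (n-i), show (1/2:ℝ)+(α+1/2) = α+1 from by ring]
  have hg : Real.Gamma (α + 1 + ((n-i:ℕ):ℝ)) = poch (α+1) (n-i) * Real.Gamma (α+1) :=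
    gamma_poch (by linarith) (n-i)
  rw [hg]
  have hne : Real.Gamma (α+1) ≠ 0 := ne_of_gt (Real.Gamma_pos_of_pos (by linarith))
  field_simp

end AuxLemmas

open Finset MeasureTheory Real in
theorem stmt6 (n : ℕ) (α x : ℝ) (hα : -1 / 2 ≤ α) (hx : 0 ≤ x) :
    |genLaguerre α n x| ≤ ∑ i ∈ Finset.range (n + 1),
      (Real.Gamma (α + 1 + (n - i : ℕ)) / Real.Gamma (α + 1)) / (Nat.factorial (n - i))
        * x ^ i / (Nat.factorial i) := by
  have hyx : (Real.sqrt x)^2 = x := Real.sq_sqrt hx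
  have hw : ∀ k, 0 ≤ poch (α+1/2) (n-k) / (Nat.factorial (n-k)) := fun k =>
    div_nonneg (poch_nonneg (by linarith) _) (by positivity)
  calc |genLaguerre α n x|
      = |∑ k ∈ range (n+1), poch (α+1/2) (n-k) / (Nat.factorial (n-k))
          * genLaguerre (-1/2) k x| := by
        rw [connection α hα n x]
    _ ≤ ∑ k ∈ range (n+1), |poch (α+1/2) (n-k) / (Nat.factorial (n-k))
          * genLaguerre (-1/2) k x| := Finset.abs_sum_le_sum_abs _ _
    _ ≤ ∑ k ∈ range (n+1), poch (α+1/2) (n-k) / (Nat.factorial (n-k))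
          * ∑ i ∈ range (k+1), poch (1/2) (k-i) / (Nat.factorial (k-i)) * x^i
            / (Nat.factorial i) := by
        refine Finset.sum_le_sum fun k _ => ?_
        rw [abs_mul, abs_of_nonneg (hw k)]
        refine mul_le_mul_of_nonneg_left ?_ (hw k)
        have hb := base k (Real.sqrt x)
        rw [hyx] at hb
        exact hb
    _ = ∑ i ∈ range (n+1), (Real.Gamma (α + 1 + ((n-i:ℕ):ℝ)) / Real.Gamma (α+1))
          / (Nat.factorial (n-i)) * x^i / (Nat.factorial i) := (rhs_identity α hα n x).symm
end

section
/- For a(v) = sin v and k = 1, the function γ_{a,1}(ξ) = 2ξ ∫₀^∞ sin(v) * e^{-2vξ} * (1 - 2vξ)^2 dv equals 2ξ(1 - 16ξ² + 48ξ⁴)/(1 + 4ξ²)³ for every ξ > 0; consequently γ_{a,1}(ξ) → 0 as ξ → ∞ and as ξ → 0+. -/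
open MeasureTheory Real Filter Set Topology

/-- Each monomial-times-trig term tends to zero. -/
lemma aux_term_tendsto (b c : ℝ) (hb : 0 < b) (n : ℕ) (trig : ℝ → ℝ)
    (htrig : ∀ x, |trig x| ≤ 1) :
    Tendsto (fun v : ℝ => c * v ^ n * Real.exp (-(b * v)) * trig v) atTop (𝓝 0) := by
  have hb' : Tendsto (fun x : ℝ => b * x) atTop atTop :=
    Tendsto.const_mul_atTop hb tendsto_id
  have h0 : Tendsto (fun v : ℝ => |c| * ((b * v) ^ n * Real.exp (-(b * v))) / b ^ n)
      atTop (𝓝 0) := by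
    have := ((tendsto_pow_mul_exp_neg_atTop_nhds_zero n).comp hb').const_mul |c|
    have h2 := this.div_const (b ^ n)
    simpa using h2
  apply squeeze_zero_norm' _ h0
  filter_upwards [eventually_ge_atTop (0 : ℝ)] with v hv
  have hvn : (0 : ℝ) ≤ v ^ n := pow_nonneg hv n
  have he : (0 : ℝ) < Real.exp (-(b * v)) := Real.exp_pos _
  have : ‖c * v ^ n * Real.exp (-(b * v)) * trig v‖
      ≤ |c| * (v ^ n * Real.exp (-(b * v))) := by
    rw [Real.norm_eq_abs, abs_mul, abs_mul, abs_mul, abs_exp,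
      abs_pow, abs_of_nonneg hv, mul_assoc]
    have h1 : |trig v| ≤ 1 := htrig v
    nlinarith [mul_nonneg (mul_nonneg (mul_nonneg (abs_nonneg c) hvn) he.le)
      (sub_nonneg.mpr h1)]
  refine this.trans (le_of_eq ?_)
  rw [mul_pow]
  field_simp

/-- The main integral computation for general `b > 0`. -/
lemma aux_integral (b : ℝ) (hb : 0 < b) :
    ∫ v in Set.Ioi (0 : ℝ), Real.sin v * Real.exp (-(b * v)) * (1 - b * v) ^ 2
      = (3 * b ^ 4 - 4 * b ^ 2 + 1) / (b ^ 2 + 1) ^ 3 := by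
  set D : ℝ := (b ^ 2 + 1) ^ 3 with hDdef
  have hD : D ≠ 0 := by positivity
  -- coefficients of the antiderivative
  set p0 : ℝ := -b * (b ^ 4 - 4 * b ^ 2 + 3) with hp0
  set p1 : ℝ := 4 * b ^ 2 * (b ^ 2 + 1) with hp1
  set p2 : ℝ := -b ^ 3 * (b ^ 2 + 1) ^ 2 with hp2
  set q0 : ℝ := -3 * b ^ 4 + 4 * b ^ 2 - 1 with hq0
  set q1 : ℝ := 2 * b * (1 - b ^ 2) * (b ^ 2 + 1) with hq1
  set q2 : ℝ := -b ^ 2 * (b ^ 2 + 1) ^ 2 with hq2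
  set F : ℝ → ℝ := fun v =>
    Real.exp (-(b * v)) *
      ((p0 + p1 * v + p2 * v ^ 2) * Real.sin v
        + (q0 + q1 * v + q2 * v ^ 2) * Real.cos v) / D with hF
  -- F has the integrand as derivative
  have hFderiv : ∀ v : ℝ,
      HasDerivAt F (Real.sin v * Real.exp (-(b * v)) * (1 - b * v) ^ 2) v := by
    intro v
    have h1 : HasDerivAt (fun v : ℝ => -(b * v)) (-b) v := by
      simpa [Pi.neg_def] using ((hasDerivAt_id v).const_mul b).neg
    have h2 : HasDerivAt (fun v : ℝ => Real.exp (-(b * v)))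
        (Real.exp (-(b * v)) * (-b)) v := h1.exp
    have hP : HasDerivAt (fun v : ℝ => p0 + p1 * v + p2 * v ^ 2)
        (p1 + p2 * (2 * v)) v := by
      have := (((hasDerivAt_id v).const_mul p1).const_add p0).add
        ((hasDerivAt_pow 2 v).const_mul p2)
      simpa [mul_comm, Pi.add_def] using this
    have hQ : HasDerivAt (fun v : ℝ => q0 + q1 * v + q2 * v ^ 2)
        (q1 + q2 * (2 * v)) v := by
      have := (((hasDerivAt_id v).const_mul q1).const_add q0).add
        ((hasDerivAt_pow 2 v).const_mul q2)
      simpa [mul_comm, Pi.add_def] using this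
    have hsin := Real.hasDerivAt_sin v
    have hcos := Real.hasDerivAt_cos v
    have hInner := (hP.mul hsin).add (hQ.mul hcos)
    have hMul := h2.mul hInner
    have hFull := hMul.div_const D
    refine hFull.congr_deriv ?_
    simp only [Pi.mul_apply, Pi.add_apply, hp0, hp1, hp2, hq0, hq1, hq2, hDdef]
    field_simp
    ring
  -- integrability via a nonnegative dominating function
  have hGderiv : ∀ x : ℝ, HasDerivAt
      (fun v : ℝ => -(Real.exp (-(b * v)) * (b ^ 2 * v ^ 2 + 1)) / b)
      (Real.exp (-(b * x)) * (1 - b * x) ^ 2) x := by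
    intro x
    have h1 : HasDerivAt (fun v : ℝ => -(b * v)) (-b) x := by
      simpa [Pi.neg_def] using ((hasDerivAt_id x).const_mul b).neg
    have h2 : HasDerivAt (fun v : ℝ => Real.exp (-(b * v)))
        (Real.exp (-(b * x)) * (-b)) x := h1.exp
    have h3 : HasDerivAt (fun v : ℝ => b ^ 2 * v ^ 2 + 1)
        (b ^ 2 * (2 * x)) x := by
      simpa [mul_comm] using ((hasDerivAt_pow 2 x).const_mul (b ^ 2)).add_const 1
    have h4 := ((h2.mul h3).neg).div_const b
    refine h4.congr_deriv ?_
    field_simp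
    ring
  have hb' : Tendsto (fun x : ℝ => b * x) atTop atTop :=
    Tendsto.const_mul_atTop hb tendsto_id
  have hGtend : Tendsto (fun v : ℝ => -(Real.exp (-(b * v)) * (b ^ 2 * v ^ 2 + 1)) / b)
      atTop (𝓝 0) := by
    have hA : Tendsto (fun v : ℝ => (b * v) ^ 2 * Real.exp (-(b * v))) atTop (𝓝 0) :=
      (tendsto_pow_mul_exp_neg_atTop_nhds_zero 2).comp hb'
    have hB : Tendsto (fun v : ℝ => Real.exp (-(b * v))) atTop (𝓝 0) :=
      Real.tendsto_exp_atBot.comp (tendsto_neg_atBot_iff.mpr hb')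
    have h : Tendsto (fun v : ℝ => -((b * v) ^ 2 * Real.exp (-(b * v))
        + Real.exp (-(b * v))) / b) atTop (𝓝 0) := by
      simpa using ((hA.add hB).neg).div_const b
    exact h.congr fun v => by ring
  have hgint : IntegrableOn (fun v : ℝ => Real.exp (-(b * v)) * (1 - b * v) ^ 2)
      (Ioi 0) := by
    refine integrableOn_Ioi_deriv_of_nonneg' (fun x _ => hGderiv x) ?_ hGtend
    intro x _
    positivity
  have hfint : IntegrableOn
      (fun v : ℝ => Real.sin v * Real.exp (-(b * v)) * (1 - b * v) ^ 2) (Ioi 0) := by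
    refine hgint.mono' ?_ ?_
    · apply Continuous.aestronglyMeasurable
      fun_prop
    · filter_upwards with v
      rw [Real.norm_eq_abs, abs_mul, abs_mul, abs_exp, abs_pow, sq_abs]
      have h1 : |Real.sin v| ≤ 1 := abs_sin_le_one v
      have he : (0 : ℝ) < Real.exp (-(b * v)) := Real.exp_pos _
      nlinarith [mul_nonneg (sub_nonneg.mpr h1) (mul_nonneg he.le (sq_nonneg (1 - b * v)))]
  -- F tends to 0 at infinity
  have hFtend : Tendsto F atTop (𝓝 0) := by
    have t1 := aux_term_tendsto b (p0 / D) hb 0 Real.sin (fun x => abs_sin_le_one x)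
    have t2 := aux_term_tendsto b (p1 / D) hb 1 Real.sin (fun x => abs_sin_le_one x)
    have t3 := aux_term_tendsto b (p2 / D) hb 2 Real.sin (fun x => abs_sin_le_one x)
    have t4 := aux_term_tendsto b (q0 / D) hb 0 Real.cos (fun x => abs_cos_le_one x)
    have t5 := aux_term_tendsto b (q1 / D) hb 1 Real.cos (fun x => abs_cos_le_one x)
    have t6 := aux_term_tendsto b (q2 / D) hb 2 Real.cos (fun x => abs_cos_le_one x)
    have hsum : Tendsto (fun v : ℝ =>
        p0 / D * v ^ 0 * Real.exp (-(b * v)) * Real.sin v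
        + p1 / D * v ^ 1 * Real.exp (-(b * v)) * Real.sin v
        + p2 / D * v ^ 2 * Real.exp (-(b * v)) * Real.sin v
        + q0 / D * v ^ 0 * Real.exp (-(b * v)) * Real.cos v
        + q1 / D * v ^ 1 * Real.exp (-(b * v)) * Real.cos v
        + q2 / D * v ^ 2 * Real.exp (-(b * v)) * Real.cos v) atTop (𝓝 0) := by
      simpa using ((((t1.add t2).add t3).add t4).add t5).add t6
    refine hsum.congr fun v => ?_
    simp only [hF]
    field_simp
    ring
  have hkey := integral_Ioi_of_hasDerivAt_of_tendsto
    (f := F) (f' := fun v => Real.sin v * Real.exp (-(b * v)) * (1 - b * v) ^ 2)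
    (a := 0) (m := 0)
    ((hFderiv 0).continuousAt.continuousWithinAt)
    (fun x _ => hFderiv x) hfint hFtend
  rw [hkey]
  simp only [hF, hq0]
  rw [Real.sin_zero, Real.cos_zero]
  simp only [mul_zero, neg_zero, Real.exp_zero]
  field_simp
  ring

/-- The closed form as a function of ξ. -/
lemma aux_closed (ξ : ℝ) (hξ : 0 < ξ) :
    2 * ξ * (∫ v in Set.Ioi (0 : ℝ),
        Real.sin v * Real.exp (-(2 * v * ξ)) * (1 - 2 * v * ξ) ^ 2)
      = 2 * ξ * (1 - 16 * ξ ^ 2 + 48 * ξ ^ 4) / (1 + 4 * ξ ^ 2) ^ 3 := by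
  have hmain := aux_integral (2 * ξ) (by positivity)
  have heq : (∫ v in Set.Ioi (0 : ℝ),
      Real.sin v * Real.exp (-(2 * v * ξ)) * (1 - 2 * v * ξ) ^ 2)
      = ∫ v in Set.Ioi (0 : ℝ),
        Real.sin v * Real.exp (-(2 * ξ * v)) * (1 - 2 * ξ * v) ^ 2 := by
    apply setIntegral_congr_fun (by measurability)
    intro v _
    simp only [show (2:ℝ) * v * ξ = 2 * ξ * v from by ring]
  rw [heq, hmain]
  have h1 : (1 + 4 * ξ ^ 2 : ℝ) ≠ 0 := by positivity
  have h2 : ((2 * ξ) ^ 2 + 1 : ℝ) ≠ 0 := by positivity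
  field_simp
  ring

theorem stmt13 :
    (∀ ξ : ℝ, 0 < ξ →
      2 * ξ * (∫ v in Set.Ioi (0 : ℝ), Real.sin v * Real.exp (-(2 * v * ξ)) * (1 - 2 * v * ξ) ^ 2)
        = 2 * ξ * (1 - 16 * ξ ^ 2 + 48 * ξ ^ 4) / (1 + 4 * ξ ^ 2) ^ 3) ∧
    Filter.Tendsto (fun ξ : ℝ =>
        2 * ξ * ∫ v in Set.Ioi (0 : ℝ), Real.sin v * Real.exp (-(2 * v * ξ)) * (1 - 2 * v * ξ) ^ 2)
      Filter.atTop (nhds 0) ∧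
    Filter.Tendsto (fun ξ : ℝ =>
        2 * ξ * ∫ v in Set.Ioi (0 : ℝ), Real.sin v * Real.exp (-(2 * v * ξ)) * (1 - 2 * v * ξ) ^ 2)
      (nhdsWithin 0 (Set.Ioi 0)) (nhds 0) := by
  -- the rational function
  set r : ℝ → ℝ := fun ξ => 2 * ξ * (1 - 16 * ξ ^ 2 + 48 * ξ ^ 4) / (1 + 4 * ξ ^ 2) ^ 3
    with hr
  have hrtop : Tendsto r atTop (𝓝 0) := by
    set P : Polynomial ℝ := Polynomial.C 96 * Polynomial.X ^ 5
      - Polynomial.C 32 * Polynomial.X ^ 3 + Polynomial.C 2 * Polynomial.X with hP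
    set Q : Polynomial ℝ := Polynomial.C 64 * Polynomial.X ^ 6
      + Polynomial.C 48 * Polynomial.X ^ 4 + Polynomial.C 12 * Polynomial.X ^ 2
      + Polynomial.C 1 with hQ
    have hdeg : P.degree < Q.degree := by
      have hPdeg : P.degree = 5 := by rw [hP]; compute_degree!
      have hQdeg : Q.degree = 6 := by rw [hQ]; compute_degree!
      rw [hPdeg, hQdeg]
      norm_num
    have := Polynomial.div_tendsto_zero_of_degree_lt P Q hdeg
    refine this.congr fun ξ => ?_
    have hden : (1 + 4 * ξ ^ 2 : ℝ) ≠ 0 := by positivity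
    simp only [hr, hP, hQ, Polynomial.eval_add, Polynomial.eval_sub,
      Polynomial.eval_mul, Polynomial.eval_pow, Polynomial.eval_C, Polynomial.eval_X]
    rw [div_eq_div_iff (by positivity) (by positivity)]
    ring
  have hr0 : Tendsto r (nhdsWithin 0 (Set.Ioi 0)) (𝓝 0) := by
    have hcont : ContinuousAt r 0 := by
      rw [hr]
      apply ContinuousAt.div
      · fun_prop
      · fun_prop
      · norm_num
    have hr00 : r 0 = 0 := by simp [hr]
    have h : Tendsto r (nhdsWithin 0 (Set.Ioi 0)) (𝓝 (r 0)) :=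
      hcont.tendsto.mono_left nhdsWithin_le_nhds
    rwa [hr00] at h
  refine ⟨fun ξ hξ => aux_closed ξ hξ, ?_, ?_⟩
  · refine hrtop.congr' ?_
    filter_upwards [eventually_gt_atTop (0 : ℝ)] with ξ hξ
    exact (aux_closed ξ hξ).symm
  · refine hr0.congr' ?_
    filter_upwards [self_mem_nhdsWithin] with ξ hξ
    exact (aux_closed ξ hξ).symm
end

section
/- For t, ξ > 0 and every nonnegative integer k, ∫₀^∞ exp(-τ(t+ξ)/2) * L_k(tτ) * L_k(ξτ) dτ = (2/(t+ξ)) * P_k(8tξ/(t+ξ)² - 1), where P_k is the Legendre polynomial of degree k; consequently the kernel B_k(ξ,t) = √(tξ) ∫₀^∞ ℓ_k(tτ) ℓ_k(ξτ) dτ equals (2√(tξ)/(t+ξ)) * P_k(8tξ/(t+ξ)² - 1). -/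
/-- The Legendre polynomial `P_n(x) = (1/(2^n n!)) dⁿ/dxⁿ (x²-1)^n` (Rodrigues formula). -/
noncomputable def legendreFn (n : ℕ) (x : ℝ) : ℝ :=
  (1 / (2 ^ n * (Nat.factorial n))) * iteratedDeriv n (fun y : ℝ => (y ^ 2 - 1) ^ n) x

open Finset MeasureTheory Real Set Polynomial

-- single variable lemma
lemma lag_single (k m : ℕ) (hm : m ≤ k) (u : ℝ) :
    ∑ i ∈ range (k+1), (-1:ℝ)^i * (k.choose i) * (i.choose m) * u^i
      = (-1)^m * (k.choose m) * u^m * (1-u)^(k-m) := by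
  have h1 : ∑ i ∈ range (k+1), (-1:ℝ)^i * (k.choose i) * (i.choose m) * u^i
      = ∑ i ∈ Ico m (k+1), (-1:ℝ)^i * (k.choose i) * (i.choose m) * u^i := by
    rw [range_eq_Ico]
    refine (Finset.sum_subset (Finset.Ico_subset_Ico (Nat.zero_le m) le_rfl) ?_).symm
    intro x hx hnx
    have : x < m := by
      simp only [Finset.mem_Ico] at hx hnx
      omega
    rw [Nat.choose_eq_zero_of_lt this]
    simp
  rw [h1, Finset.sum_Ico_eq_sum_range]
  have h2 : (1 - u)^(k-m) = ∑ a ∈ range (k-m+1), (-u)^a * ((k-m).choose a) := by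
    have := add_pow (-u) 1 (k-m)
    simp only [one_pow, mul_one] at this
    rw [show (1:ℝ) - u = -u + 1 by ring, this]
  rw [h2, Finset.mul_sum]
  have hr : k + 1 - m = k - m + 1 := by omega
  rw [hr]
  apply Finset.sum_congr rfl
  intro a ha
  simp only [Finset.mem_range] at ha
  have hak : m + a ≤ k := by omega
  have hch : (k.choose (m+a)) * ((m+a).choose m) = k.choose m * (k-m).choose a := by
    have := Nat.choose_mul (n := k) (Nat.le_add_right m a)
    simpa using this
  have : ((k.choose (m+a)) * ((m+a).choose m) : ℝ) = (k.choose m : ℝ) * ((k-m).choose a) := by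
    exact_mod_cast congrArg (Nat.cast : ℕ → ℝ) hch
  push_cast at this ⊢
  calc (-1:ℝ)^(m+a) * (k.choose (m+a)) * ((m+a).choose m) * u^(m+a)
      = ((k.choose (m+a):ℝ) * ((m+a).choose m)) * ((-1)^(m+a) * u^(m+a)) := by ring
    _ = ((k.choose m : ℝ) * ((k-m).choose a)) * ((-1)^(m+a) * u^(m+a)) := by rw [this]
    _ = (-1:ℝ)^m * (k.choose m) * u^m * ((-u)^a * ((k-m).choose a)) := by
        rw [pow_add, pow_add, neg_pow u a]; ring


lemma vand (i j k : ℕ) (hj : j ≤ k) :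
    ((i+j).choose i : ℕ) = ∑ m ∈ range (k+1), (i.choose m) * (j.choose m) := by
  have h1 : (i+j).choose j = ∑ p ∈ antidiagonal j, i.choose p.1 * j.choose p.2 :=
    Nat.add_choose_eq i j j
  have h2 : ∑ p ∈ antidiagonal j, i.choose p.1 * j.choose p.2
      = ∑ a ∈ range (j+1), i.choose a * j.choose (j - a) :=
    Finset.Nat.sum_antidiagonal_eq_sum_range_succ (fun a b => i.choose a * j.choose b) j
  have h3 : ∀ a ∈ range (j+1), i.choose a * j.choose (j-a) = i.choose a * j.choose a := by
    intro a ha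
    rw [Nat.choose_symm (by simp at ha; omega)]
  have h4 : ∑ a ∈ range (j+1), i.choose a * j.choose a
      = ∑ a ∈ range (k+1), i.choose a * j.choose a := by
    apply Finset.sum_subset
    · apply Finset.range_subset_range.2; omega
    · intro x hx hnx
      simp only [Finset.mem_range] at hnx
      rw [Nat.choose_eq_zero_of_lt (by omega : j < x)]
      simp
  rw [Nat.choose_symm_add, h1, h2, Finset.sum_congr rfl h3, h4]

lemma core (k : ℕ) (u v : ℝ) :
    ∑ i ∈ range (k+1), ∑ j ∈ range (k+1),
        (-1:ℝ)^(i+j) * (k.choose i) * (k.choose j) * ((i+j).choose i) * u^i * v^j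
      = ∑ m ∈ range (k+1), ((k.choose m : ℝ))^2 * ((1-u)*(1-v))^(k-m) * (u*v)^m := by
  have step1 : ∀ i ∈ range (k+1), ∀ j ∈ range (k+1),
      (-1:ℝ)^(i+j) * (k.choose i) * (k.choose j) * ((i+j).choose i) * u^i * v^j
      = ∑ m ∈ range (k+1), ((-1:ℝ)^i * (k.choose i) * (i.choose m) * u^i)
          * ((-1:ℝ)^j * (k.choose j) * (j.choose m) * v^j) := by
    intro i hi j hj
    simp only [Finset.mem_range] at hi hj
    have hv : (((i+j).choose i : ℕ) : ℝ) = ∑ m ∈ range (k+1), ((i.choose m : ℝ)) * (j.choose m) := by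
      rw [vand i j k (by omega)]
      push_cast
      rfl
    rw [hv]
    simp only [Finset.mul_sum, Finset.sum_mul]
    apply Finset.sum_congr rfl
    intro m hm
    rw [pow_add]
    ring
  calc ∑ i ∈ range (k+1), ∑ j ∈ range (k+1),
        (-1:ℝ)^(i+j) * (k.choose i) * (k.choose j) * ((i+j).choose i) * u^i * v^j
      = ∑ i ∈ range (k+1), ∑ j ∈ range (k+1), ∑ m ∈ range (k+1),
          ((-1:ℝ)^i * (k.choose i) * (i.choose m) * u^i)
          * ((-1:ℝ)^j * (k.choose j) * (j.choose m) * v^j) := by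
        exact Finset.sum_congr rfl fun i hi => Finset.sum_congr rfl fun j hj => step1 i hi j hj
    _ = ∑ m ∈ range (k+1), ∑ i ∈ range (k+1), ∑ j ∈ range (k+1),
          ((-1:ℝ)^i * (k.choose i) * (i.choose m) * u^i)
          * ((-1:ℝ)^j * (k.choose j) * (j.choose m) * v^j) := by
        rw [show (∑ i ∈ range (k+1), ∑ j ∈ range (k+1), ∑ m ∈ range (k+1),
          ((-1:ℝ)^i * (k.choose i) * (i.choose m) * u^i)
          * ((-1:ℝ)^j * (k.choose j) * (j.choose m) * v^j))
          = ∑ i ∈ range (k+1), ∑ m ∈ range (k+1), ∑ j ∈ range (k+1),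
          ((-1:ℝ)^i * (k.choose i) * (i.choose m) * u^i)
          * ((-1:ℝ)^j * (k.choose j) * (j.choose m) * v^j)
          from Finset.sum_congr rfl fun i _ => Finset.sum_comm]
        exact Finset.sum_comm
    _ = ∑ m ∈ range (k+1), (∑ i ∈ range (k+1), (-1:ℝ)^i * (k.choose i) * (i.choose m) * u^i)
          * (∑ j ∈ range (k+1), (-1:ℝ)^j * (k.choose j) * (j.choose m) * v^j) := by
        apply Finset.sum_congr rfl
        intro m _
        rw [Finset.sum_mul_sum]
    _ = ∑ m ∈ range (k+1), ((k.choose m : ℝ))^2 * ((1-u)*(1-v))^(k-m) * (u*v)^m := by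
        apply Finset.sum_congr rfl
        intro m hm
        simp only [Finset.mem_range] at hm
        rw [lag_single k m (by omega) u, lag_single k m (by omega) v]
        have h1 : (-1:ℝ)^m * (-1)^m = 1 := by
          rw [← pow_add, ← two_mul, pow_mul]; norm_num
        rw [mul_pow, mul_pow]
        linear_combination (((k.choose m : ℝ))^2 * u^m * v^m * (1-u)^(k-m) * (1-v)^(k-m)) * h1

lemma iteratedDeriv_polyeval (p : ℝ[X]) (n : ℕ) :
    iteratedDeriv n (fun y : ℝ => p.eval y) = fun y => (derivative^[n] p).eval y := by
  induction n generalizing p with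
  | zero => simp
  | succ n ih =>
    have h : deriv (fun y : ℝ => p.eval y) = fun y => p.derivative.eval y := by
      funext y; exact Polynomial.deriv (p := p)
    rw [iteratedDeriv_succ', h, ih, Function.iterate_succ_apply]

lemma coeff_nat (k i : ℕ) (hi : i ≤ k) :
    k.choose i * k.descFactorial (k-i) * k.descFactorial i
      = k.choose i ^ 2 * k.factorial := by
  rw [Nat.descFactorial_eq_factorial_mul_choose, Nat.descFactorial_eq_factorial_mul_choose,
    Nat.choose_symm hi]
  have h := Nat.choose_mul_factorial_mul_factorial hi
  calc k.choose i * ((k-i).factorial * k.choose i) * (i.factorial * k.choose i)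
      = k.choose i ^ 2 * (k.choose i * i.factorial * (k-i).factorial) := by ring
    _ = k.choose i ^ 2 * k.factorial := by rw [h]

lemma legendre_explicit (k : ℕ) (x : ℝ) :
    legendreFn k x = ∑ m ∈ range (k+1),
      ((k.choose m : ℝ))^2 * ((x-1)/2)^(k-m) * ((x+1)/2)^m := by
  have hfun : (fun y : ℝ => (y^2-1)^k)
      = fun y => ((X - C (1:ℝ))^k * (X - C (-1:ℝ))^k).eval y := by
    funext y
    simp only [eval_mul, eval_pow, eval_sub, eval_X, eval_C, ← mul_pow]
    ring_nf
  rw [legendreFn, hfun, iteratedDeriv_polyeval]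
  rw [Polynomial.iterate_derivative_mul]
  simp only [Polynomial.iterate_derivative_X_sub_pow, eval_finset_sum, smul_mul_smul_comm,
    eval_smul, eval_mul, eval_pow, eval_sub, eval_X, eval_C, smul_eq_mul, smul_smul]
  rw [Finset.mul_sum]
  rw [← Finset.sum_range_reflect (fun m => ((k.choose m : ℝ))^2 * ((x-1)/2)^(k-m) * ((x+1)/2)^m) (k+1)]
  apply Finset.sum_congr rfl
  intro i hi
  simp only [Finset.mem_range] at hi
  have hik : i ≤ k := by omega
  have e1 : k + 1 - 1 - i = k - i := by omega
  have e2 : k - (k - i) = i := by omega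
  have e3 : k - (k - i) = i := e2
  rw [e1, e2]
  have hc := coeff_nat k i hik
  have hcR : ((k.choose i : ℝ)) * (k.descFactorial (k-i)) * (k.descFactorial i)
      = ((k.choose i : ℝ))^2 * (k.factorial) := by exact_mod_cast hc
  have hcs : (k.choose (k-i)) = (k.choose i) := Nat.choose_symm hik
  have h2 : ((2:ℝ))^k = 2^i * 2^(k-i) := by rw [← pow_add]; congr 1; omega
  have hfac : ((k.factorial : ℝ)) ≠ 0 := Nat.cast_ne_zero.2 k.factorial_ne_zero
  rw [hcs]
  field_simp
  rw [nsmul_eq_mul, h2, div_pow, div_pow]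
  push_cast
  field_simp
  linear_combination ((x-1)^i * (x+1)^(k-i)) * hcR


lemma integrable_mono_exp (n : ℕ) {r : ℝ} (hr : 0 < r) :
    IntegrableOn (fun τ : ℝ => τ^n * Real.exp (-(r*τ))) (Ioi (0:ℝ)) := by
  have h := integrableOn_rpow_mul_exp_neg_mul_rpow
    (by exact_mod_cast neg_one_lt_zero.trans_le (Nat.cast_nonneg n) : (-1:ℝ) < (n:ℝ))
    (zero_lt_one' ℝ) hr
  have : (fun x : ℝ => x ^ (n:ℝ) * Real.exp (-r * x ^ (1:ℝ)))
      = fun τ : ℝ => τ^n * Real.exp (-(r*τ)) := by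
    funext x
    rw [Real.rpow_one, Real.rpow_natCast, neg_mul]
  rwa [this] at h

lemma integral_mono_exp (n : ℕ) {r : ℝ} (hr : 0 < r) :
    ∫ τ in Ioi (0:ℝ), τ^n * Real.exp (-(r*τ)) = (n.factorial : ℝ) / r^(n+1) := by
  have h := Real.integral_rpow_mul_exp_neg_mul_Ioi (by positivity : (0:ℝ) < (n:ℝ) + 1) hr
  have heq : ∀ τ ∈ Ioi (0:ℝ), τ ^ ((n:ℝ) + 1 - 1) * Real.exp (-(r * τ))
      = τ^n * Real.exp (-(r*τ)) := by
    intro τ _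
    rw [add_sub_cancel_right, Real.rpow_natCast]
  rw [setIntegral_congr_fun measurableSet_Ioi heq] at h
  rw [h, Real.Gamma_nat_eq_factorial]
  rw [show ((n:ℝ) + 1) = ((n+1 : ℕ) : ℝ) by push_cast; ring, Real.rpow_natCast]
  rw [one_div, inv_pow]
  field_simp

lemma integral_main (k : ℕ) (t ξ : ℝ) (ht : 0 < t) (hξ : 0 < ξ) :
    (∫ τ in Set.Ioi (0 : ℝ),
        Real.exp (-(τ * (t + ξ)) / 2) * laguerreFn k (t * τ) * laguerreFn k (ξ * τ))
      = ∑ i ∈ range (k+1), ∑ j ∈ range (k+1),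
          ((-1:ℝ)^(i+j) * (k.choose i) * (k.choose j) * t^i * ξ^j /
            ((i.factorial : ℝ) * (j.factorial : ℝ)))
            * ((((i+j).factorial : ℝ)) / ((t+ξ)/2)^(i+j+1)) := by
  set s : ℝ := (t+ξ)/2 with hs
  have hspos : 0 < s := by positivity
  have key : ∀ τ : ℝ, Real.exp (-(τ * (t + ξ)) / 2) * laguerreFn k (t * τ) * laguerreFn k (ξ * τ)
      = ∑ i ∈ range (k+1), ∑ j ∈ range (k+1),
          ((-1:ℝ)^(i+j) * (k.choose i) * (k.choose j) * t^i * ξ^j /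
            ((i.factorial : ℝ) * (j.factorial : ℝ)))
            * (τ^(i+j) * Real.exp (-(s*τ))) := by
    intro τ
    have hexp : Real.exp (-(τ * (t + ξ)) / 2) = Real.exp (-(s*τ)) := by
      congr 1; rw [hs]; ring
    rw [hexp, laguerreFn, laguerreFn, mul_assoc, Finset.sum_mul_sum, Finset.mul_sum]
    apply Finset.sum_congr rfl; intro i hi
    rw [Finset.mul_sum]
    apply Finset.sum_congr rfl; intro j hj
    simp only [Finset.mem_range] at hi hj
    rw [Nat.choose_symm (by omega : i ≤ k), Nat.choose_symm (by omega : j ≤ k)]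
    have hfi : ((i.factorial : ℝ)) ≠ 0 := Nat.cast_ne_zero.2 i.factorial_ne_zero
    have hfj : ((j.factorial : ℝ)) ≠ 0 := Nat.cast_ne_zero.2 j.factorial_ne_zero
    rw [mul_pow, mul_pow, pow_add, pow_add]
    field_simp
  rw [MeasureTheory.setIntegral_congr_fun measurableSet_Ioi (fun τ _ => key τ)]
  rw [MeasureTheory.integral_finset_sum]
  · apply Finset.sum_congr rfl; intro i _
    rw [MeasureTheory.integral_finset_sum]
    · apply Finset.sum_congr rfl; intro j _
      rw [MeasureTheory.integral_const_mul, integral_mono_exp (i+j) hspos]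
    · intro j _
      exact ((integrable_mono_exp (i+j) hspos).const_mul _)
  · intro i _
    apply MeasureTheory.integrable_finset_sum
    intro j _
    exact ((integrable_mono_exp (i+j) hspos).const_mul _)

theorem stmt16 (k : ℕ) (t ξ : ℝ) (ht : 0 < t) (hξ : 0 < ξ) :
    (∫ τ in Set.Ioi (0 : ℝ),
        Real.exp (-(τ * (t + ξ)) / 2) * laguerreFn k (t * τ) * laguerreFn k (ξ * τ))
      = (2 / (t + ξ)) * legendreFn k (8 * t * ξ / (t + ξ) ^ 2 - 1) ∧
    Real.sqrt (t * ξ) * (∫ τ in Set.Ioi (0 : ℝ),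
        (Real.exp (-(t * τ) / 2) * laguerreFn k (t * τ)) *
          (Real.exp (-(ξ * τ) / 2) * laguerreFn k (ξ * τ)))
      = (2 * Real.sqrt (t * ξ) / (t + ξ)) * legendreFn k (8 * t * ξ / (t + ξ) ^ 2 - 1) := by
  have hts : t + ξ ≠ 0 := by positivity
  set s : ℝ := (t+ξ)/2 with hs
  have hspos : 0 < s := by positivity
  have hsne : s ≠ 0 := ne_of_gt hspos
  set x : ℝ := 8 * t * ξ / (t + ξ) ^ 2 - 1 with hx
  have part1 : (∫ τ in Set.Ioi (0 : ℝ),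
        Real.exp (-(τ * (t + ξ)) / 2) * laguerreFn k (t * τ) * laguerreFn k (ξ * τ))
      = (2 / (t + ξ)) * legendreFn k x := by
    rw [integral_main k t ξ ht hξ, legendre_explicit]
    have hA : ∑ i ∈ range (k+1), ∑ j ∈ range (k+1),
          ((-1:ℝ)^(i+j) * (k.choose i) * (k.choose j) * t^i * ξ^j /
            ((i.factorial : ℝ) * (j.factorial : ℝ)))
            * ((((i+j).factorial : ℝ)) / ((t+ξ)/2)^(i+j+1))
        = (1/s) * ∑ i ∈ range (k+1), ∑ j ∈ range (k+1),
          (-1:ℝ)^(i+j) * (k.choose i) * (k.choose j) * ((i+j).choose i) * (t/s)^i * (ξ/s)^j := by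
      rw [Finset.mul_sum]
      apply Finset.sum_congr rfl; intro i _
      rw [Finset.mul_sum]
      apply Finset.sum_congr rfl; intro j _
      have hfact : (((i+j).factorial : ℝ)) = (((i+j).choose i : ℕ)) * i.factorial * j.factorial := by
        have := Nat.choose_mul_factorial_mul_factorial (Nat.le_add_right i j)
        rw [Nat.add_sub_cancel_left] at this
        exact_mod_cast this.symm
      have hfi : ((i.factorial : ℝ)) ≠ 0 := Nat.cast_ne_zero.2 i.factorial_ne_zero
      have hfj : ((j.factorial : ℝ)) ≠ 0 := Nat.cast_ne_zero.2 j.factorial_ne_zero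
      rw [hfact, ← hs]
      rw [show s^(i+j+1) = s^i * (s^j * s) by rw [pow_add, pow_add, pow_one, mul_assoc]]
      clear_value s
      field_simp
      rw [div_pow, div_pow]
      have e1 : s^i * (t^i / s^i) = t^i := mul_div_cancel₀ _ (pow_ne_zero _ hsne)
      have e2 : s^j * (ξ^j / s^j) = ξ^j := mul_div_cancel₀ _ (pow_ne_zero _ hsne)
      linear_combination (-((k.choose i : ℝ) * (k.choose j) * ((i+j).choose i : ℕ)) * (s^j * (ξ^j / s^j))) * e1
        + (-((k.choose i : ℝ) * (k.choose j) * ((i+j).choose i : ℕ)) * t^i) * e2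
    rw [hA, core k (t/s) (ξ/s)]
    have h1 : (1-t/s)*(1-ξ/s) = (x-1)/2 := by
      rw [hx, hs]; field_simp; ring
    have h2 : (t/s)*(ξ/s) = (x+1)/2 := by
      rw [hx, hs]; field_simp; ring
    have h3 : (1:ℝ)/s = 2/(t+ξ) := by
      rw [hs]; field_simp
    rw [h1, h2, h3]
  refine ⟨part1, ?_⟩
  have hcong : ∀ τ : ℝ, (Real.exp (-(t * τ) / 2) * laguerreFn k (t * τ)) *
          (Real.exp (-(ξ * τ) / 2) * laguerreFn k (ξ * τ))
      = Real.exp (-(τ * (t + ξ)) / 2) * laguerreFn k (t * τ) * laguerreFn k (ξ * τ) := by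
    intro τ
    rw [show Real.exp (-(τ * (t + ξ)) / 2) = Real.exp (-(t * τ) / 2) * Real.exp (-(ξ * τ) / 2) by
      rw [← Real.exp_add]; congr 1; ring]
    ring
  rw [MeasureTheory.setIntegral_congr_fun measurableSet_Ioi (fun τ _ => hcong τ), part1]
  ring
end

section
/- Let a : (0,∞) → ℝ be bounded and measurable with limits a₀ at 0 and a_∞ at ∞, and suppose additionally a is continuously differentiable with bounded derivative. Then for each nonnegative integer k, the derivative of γ_{a,k}(ξ) = 2ξ ∫₀^∞ a(v) e^{-2vξ} L_k(2vξ)² dv tends to 0 as ξ → ∞. -/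
open Real MeasureTheory Set Filter Metric
open scoped Topology

namespace Stmt19Aux

lemma mono_bound (j : ℕ) {x : ℝ} (hx : 0 ≤ x) :
    x ^ j ≤ 8 ^ j * j.factorial * Real.exp (x / 8) := by
  have h8 : (0:ℝ) ≤ x / 8 := by positivity
  have h1 : (x/8) ^ j / j.factorial ≤ Real.exp (x/8) := by
    refine le_trans ?_ (Real.sum_le_exp_of_nonneg h8 (j+1))
    exact Finset.single_le_sum (f := fun i => (x/8:ℝ)^i / i.factorial)
      (fun i _ => by positivity) (Finset.self_mem_range_succ j)
  have h2 : (x/8) ^ j ≤ Real.exp (x/8) * j.factorial := by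
    rw [div_le_iff₀ (by positivity)] at h1; exact h1
  calc x ^ j = 8 ^ j * (x/8) ^ j := by rw [div_pow]; field_simp
    _ ≤ 8 ^ j * (Real.exp (x/8) * j.factorial) :=
        mul_le_mul_of_nonneg_left h2 (by positivity)
    _ = 8 ^ j * j.factorial * Real.exp (x / 8) := by ring

lemma sum_pow_bound (n : ℕ) (c : ℕ → ℝ) {x : ℝ} (hx : 0 ≤ x) :
    |∑ i ∈ Finset.range n, c i * x ^ i| ≤
      (∑ i ∈ Finset.range n, |c i| * 8 ^ i * i.factorial) * Real.exp (x / 8) := by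
  refine le_trans (Finset.abs_sum_le_sum_abs _ _) ?_
  rw [Finset.sum_mul]
  refine Finset.sum_le_sum fun i _ => ?_
  rw [abs_mul, abs_pow, abs_of_nonneg hx]
  calc |c i| * x ^ i ≤ |c i| * (8 ^ i * i.factorial * Real.exp (x/8)) :=
        mul_le_mul_of_nonneg_left (mono_bound i hx) (abs_nonneg _)
    _ = |c i| * 8 ^ i * i.factorial * Real.exp (x / 8) := by ring

noncomputable def lc (k i : ℕ) : ℝ := (-1 : ℝ) ^ i * (Nat.choose k (k - i)) / (Nat.factorial i)

noncomputable def lagD (k : ℕ) (x : ℝ) : ℝ :=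
  ∑ i ∈ Finset.range (k + 1), lc k i * ((i : ℝ) * x ^ (i - 1))

lemma laguerre_eq (k : ℕ) : laguerreFn k = fun x => ∑ i ∈ Finset.range (k+1), lc k i * x ^ i := by
  funext x
  exact Finset.sum_congr rfl fun i _ => by unfold lc; ring

lemma hasDerivAt_laguerre (k : ℕ) (x : ℝ) : HasDerivAt (laguerreFn k) (lagD k x) x := by
  rw [laguerre_eq]
  exact HasDerivAt.fun_sum fun i _ => (hasDerivAt_pow i x).const_mul (lc k i)

lemma lagD_eq (k : ℕ) (x : ℝ) :
    lagD k x = ∑ i ∈ Finset.range k, (lc k (i+1) * (i+1)) * x ^ i := by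
  unfold lagD
  rw [Finset.sum_range_succ']
  simp only [Nat.cast_zero, zero_mul, mul_zero, add_zero, Nat.add_sub_cancel]
  exact Finset.sum_congr rfl fun i _ => by push_cast; ring

lemma continuous_laguerre (k : ℕ) : Continuous (laguerreFn k) := by
  rw [laguerre_eq]
  exact continuous_finset_sum _ fun i _ => continuous_const.mul (continuous_pow i)

lemma continuous_lagD (k : ℕ) : Continuous (lagD k) := by
  have h : lagD k = fun x => ∑ i ∈ Finset.range k, (lc k (i+1) * (i+1)) * x ^ i := by
    funext x; exact lagD_eq k x
  rw [h]
  exact continuous_finset_sum _ fun i _ => continuous_const.mul (continuous_pow i)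

lemma laguerre_bd (k : ℕ) : ∃ C : ℝ, 0 ≤ C ∧
    (∀ x, 0 ≤ x → |laguerreFn k x| ≤ C * Real.exp (x/8)) ∧
    (∀ x, 0 ≤ x → |lagD k x| ≤ C * Real.exp (x/8)) := by
  set A := ∑ i ∈ Finset.range (k+1), |lc k i| * 8 ^ i * (i.factorial : ℝ) with hA
  set B := ∑ i ∈ Finset.range k, |lc k (i+1) * (i+1)| * 8 ^ i * (i.factorial : ℝ) with hB
  have hA0 : 0 ≤ A := Finset.sum_nonneg fun i _ => by positivity
  refine ⟨max A B, le_max_of_le_left hA0, fun x hx => ?_, fun x hx => ?_⟩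
  · refine le_trans ?_ (mul_le_mul_of_nonneg_right (le_max_left A B) (Real.exp_pos _).le)
    rw [laguerre_eq]
    exact sum_pow_bound (k+1) (lc k) hx
  · refine le_trans ?_ (mul_le_mul_of_nonneg_right (le_max_right A B) (Real.exp_pos _).le)
    rw [lagD_eq]
    exact sum_pow_bound k (fun i => lc k (i+1) * (i+1)) hx

lemma integral_exp_Ioi {c : ℝ} (hc : 0 < c) : ∫ v in Ioi (0:ℝ), Real.exp (-(c*v)) = 1/c := by
  have h := integral_rpow_mul_exp_neg_mul_Ioi (a := 1) (r := c) one_pos hc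
  simpa [Real.rpow_one, Real.Gamma_one] using h

lemma integral_mul_exp_Ioi {c : ℝ} (hc : 0 < c) :
    ∫ v in Ioi (0:ℝ), v * Real.exp (-(c*v)) = 1/c^2 := by
  have h := integral_rpow_mul_exp_neg_mul_Ioi (a := 2) (r := c) two_pos hc
  rw [Real.Gamma_two, mul_one] at h
  rw [show ((2:ℝ)-1) = 1 by norm_num] at h
  simp only [Real.rpow_one] at h
  rw [h, show ((1:ℝ)/c)^(2:ℝ) = (1/c)^(2:ℕ) by rw [← Real.rpow_natCast]; norm_num]
  rw [div_pow, one_pow]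

lemma integrable_exp_Ioi {c : ℝ} (hc : 0 < c) :
    IntegrableOn (fun v => Real.exp (-(c*v))) (Ioi (0:ℝ)) := by
  simpa [neg_mul] using exp_neg_integrableOn_Ioi 0 hc

lemma integrable_mul_exp_Ioi {c : ℝ} (hc : 0 < c) :
    IntegrableOn (fun v => v * Real.exp (-(c*v))) (Ioi (0:ℝ)) := by
  refine integrable_of_isBigO_exp_neg (half_pos hc)
    ((continuous_id.mul (Real.continuous_exp.comp
      (continuous_const.mul continuous_id).neg)).continuousOn) ?_
  have h1 : (fun x:ℝ => x ^ 1) =o[atTop] fun x => Real.exp ((c/2) * x) :=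
    isLittleO_pow_exp_pos_mul_atTop 1 (half_pos hc)
  have h2 := h1.isBigO.mul (Asymptotics.isBigO_refl (fun x:ℝ => Real.exp (-(c*x))) atTop)
  refine h2.congr (fun x => by ring) (fun x => ?_)
  rw [← Real.exp_add]; congr 1; ring

/-- The pointwise derivative in `ξ` of the integrand. -/
noncomputable def Fd (k : ℕ) (a : ℝ → ℝ) (ξ v : ℝ) : ℝ :=
  a v * (Real.exp (-(2*v*ξ)) * -(2*v) * (laguerreFn k (2*v*ξ))^2
    + Real.exp (-(2*v*ξ)) * (2 * laguerreFn k (2*v*ξ) * (lagD k (2*v*ξ) * (2*v))))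

lemma hasDerivAt_Fd (k : ℕ) (a : ℝ → ℝ) (v ξ : ℝ) :
    HasDerivAt (fun ξ : ℝ => a v * Real.exp (-(2 * v * ξ)) * (laguerreFn k (2 * v * ξ)) ^ 2)
      (Fd k a ξ v) ξ := by
  have h1 : HasDerivAt (fun ξ : ℝ => 2*v*ξ) (2*v) ξ := by
    simpa using (hasDerivAt_id ξ).const_mul (2*v)
  have hexp : HasDerivAt (fun ξ : ℝ => Real.exp (-(2*v*ξ)))
      (Real.exp (-(2*v*ξ)) * -(2*v)) ξ := h1.neg.exp
  have hL : HasDerivAt (fun ξ : ℝ => laguerreFn k (2*v*ξ)) (lagD k (2*v*ξ) * (2*v)) ξ :=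
    (hasDerivAt_laguerre k (2*v*ξ)).comp ξ h1
  have hpow := hL.fun_pow 2
  have hmul := (hexp.mul hpow).const_mul (a v)
  have heq : (fun ξ : ℝ => a v * Real.exp (-(2*v*ξ)) * (laguerreFn k (2*v*ξ))^2)
      = (fun ξ : ℝ => a v * (Real.exp (-(2*v*ξ)) * (laguerreFn k (2*v*ξ))^2)) := by
    funext ξ; ring
  rw [heq]
  refine hmul.congr_deriv ?_
  unfold Fd
  push_cast
  ring


lemma bound1 (k : ℕ) {C M : ℝ} (hC0 : 0 ≤ C)
    (hCL : ∀ x, 0 ≤ x → |laguerreFn k x| ≤ C * Real.exp (x/8))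
    {av : ℝ} (hav : |av| ≤ M) {ξ v : ℝ} (hξ : 0 < ξ) (hv : 0 < v) :
    |av * Real.exp (-(2*v*ξ)) * (laguerreFn k (2*v*ξ))^2| ≤ M * C^2 * Real.exp (-(ξ*v)) := by
  have hM : 0 ≤ M := le_trans (abs_nonneg _) hav
  have hu0 : (0:ℝ) ≤ 2*v*ξ := by positivity
  have hL := hCL _ hu0
  have h2 : (laguerreFn k (2*v*ξ))^2 ≤ (C * Real.exp ((2*v*ξ)/8))^2 := by
    rw [← sq_abs]
    exact pow_le_pow_left₀ (abs_nonneg _) hL 2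
  have habs : |av * Real.exp (-(2*v*ξ)) * (laguerreFn k (2*v*ξ))^2|
      = |av| * Real.exp (-(2*v*ξ)) * (laguerreFn k (2*v*ξ))^2 := by
    rw [abs_mul, abs_mul, abs_of_pos (Real.exp_pos (-(2*v*ξ))), abs_of_nonneg (sq_nonneg (laguerreFn k (2*v*ξ)))]
  rw [habs]
  calc |av| * Real.exp (-(2*v*ξ)) * (laguerreFn k (2*v*ξ))^2
      ≤ M * Real.exp (-(2*v*ξ)) * (C * Real.exp ((2*v*ξ)/8))^2 := by
        apply mul_le_mul (mul_le_mul_of_nonneg_right hav (Real.exp_pos _).le) h2 (sq_nonneg _)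
        positivity
    _ = M * C^2 * (Real.exp (-(2*v*ξ)) * (Real.exp ((2*v*ξ)/8) * Real.exp ((2*v*ξ)/8))) := by
        ring
    _ = M * C^2 * Real.exp (-(2*v*ξ) + ((2*v*ξ)/8 + (2*v*ξ)/8)) := by
        rw [← Real.exp_add, ← Real.exp_add]
    _ ≤ M * C^2 * Real.exp (-(ξ*v)) := by
        have h3 : -(2*v*ξ) + ((2*v*ξ)/8 + (2*v*ξ)/8) ≤ -(ξ*v) := by
          nlinarith [mul_pos hv hξ]
        exact mul_le_mul_of_nonneg_left (Real.exp_le_exp.2 h3) (by positivity)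

lemma bound2 (k : ℕ) {C M : ℝ} (hC0 : 0 ≤ C)
    (hCL : ∀ x, 0 ≤ x → |laguerreFn k x| ≤ C * Real.exp (x/8))
    (hCD : ∀ x, 0 ≤ x → |lagD k x| ≤ C * Real.exp (x/8))
    (a : ℝ → ℝ) {v : ℝ} (hav : |a v| ≤ M) {ξ : ℝ} (hξ : 0 < ξ) (hv : 0 < v) :
    |Fd k a ξ v| ≤ 6 * (M * C^2) * (v * Real.exp (-(ξ*v))) := by
  have hM : 0 ≤ M := le_trans (abs_nonneg _) hav
  have hu0 : (0:ℝ) ≤ 2*v*ξ := by positivity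
  have hL := hCL _ hu0
  have hD := hCD _ hu0
  have hl2 : (laguerreFn k (2*v*ξ))^2 ≤ (C * Real.exp ((2*v*ξ)/8))^2 := by
    rw [← sq_abs]; exact pow_le_pow_left₀ (abs_nonneg _) hL 2
  have hld : |laguerreFn k (2*v*ξ) * lagD k (2*v*ξ)| ≤ (C * Real.exp ((2*v*ξ)/8))^2 := by
    rw [abs_mul, sq]
    exact mul_le_mul hL hD (abs_nonneg _) (le_trans (abs_nonneg _) hL)
  have hFd : Fd k a ξ v = a v * ((Real.exp (-(2*v*ξ)) * (2*v)) *
      (2*(laguerreFn k (2*v*ξ) * lagD k (2*v*ξ)) - (laguerreFn k (2*v*ξ))^2)) := by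
    unfold Fd; ring
  have hXpos : 0 < Real.exp (-(2*v*ξ)) * (2*v) := mul_pos (Real.exp_pos _) (by linarith)
  have habs : |Fd k a ξ v| = |a v| * ((Real.exp (-(2*v*ξ)) * (2*v)) *
      |2*(laguerreFn k (2*v*ξ) * lagD k (2*v*ξ)) - (laguerreFn k (2*v*ξ))^2|) := by
    rw [hFd, abs_mul, abs_mul, abs_of_pos hXpos]
  have htri : |2*(laguerreFn k (2*v*ξ) * lagD k (2*v*ξ)) - (laguerreFn k (2*v*ξ))^2|
      ≤ 3 * (C * Real.exp ((2*v*ξ)/8))^2 := by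
    have h1 : |2*(laguerreFn k (2*v*ξ) * lagD k (2*v*ξ)) - (laguerreFn k (2*v*ξ))^2|
        ≤ |2*(laguerreFn k (2*v*ξ) * lagD k (2*v*ξ))| + |(laguerreFn k (2*v*ξ))^2| := by
      rw [sub_eq_add_neg]
      refine (abs_add_le _ _).trans ?_
      rw [abs_neg]
    have h2 : |(laguerreFn k (2*v*ξ))^2| = (laguerreFn k (2*v*ξ))^2 :=
      abs_of_nonneg (sq_nonneg _)
    rw [h2, abs_mul, abs_two] at h1
    refine h1.trans ?_
    have := add_le_add (mul_le_mul_of_nonneg_left hld (by norm_num : (0:ℝ) ≤ 2)) hl2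
    refine this.trans ?_
    ring_nf
    linarith [sq_nonneg (C * Real.exp ((2*v*ξ)/8))]
  calc |Fd k a ξ v|
      = |a v| * ((Real.exp (-(2*v*ξ)) * (2*v)) *
        |2*(laguerreFn k (2*v*ξ) * lagD k (2*v*ξ)) - (laguerreFn k (2*v*ξ))^2|) := habs
    _ ≤ M * ((Real.exp (-(2*v*ξ)) * (2*v)) * (3 * (C * Real.exp ((2*v*ξ)/8))^2)) := by
        refine mul_le_mul hav (mul_le_mul_of_nonneg_left htri hXpos.le)
          (mul_nonneg hXpos.le (abs_nonneg _)) hM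
    _ = 6*(M*C^2) * (v * (Real.exp (-(2*v*ξ)) *
        (Real.exp ((2*v*ξ)/8) * Real.exp ((2*v*ξ)/8)))) := by ring
    _ = 6*(M*C^2) * (v * Real.exp (-(2*v*ξ) + ((2*v*ξ)/8 + (2*v*ξ)/8))) := by
        rw [← Real.exp_add, ← Real.exp_add]
    _ ≤ 6*(M*C^2) * (v * Real.exp (-(ξ*v))) := by
        have h3 : -(2*v*ξ) + ((2*v*ξ)/8 + (2*v*ξ)/8) ≤ -(ξ*v) := by
          nlinarith [mul_pos hv hξ]
        exact mul_le_mul_of_nonneg_left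
          (mul_le_mul_of_nonneg_left (Real.exp_le_exp.2 h3) hv.le) (by positivity)

end Stmt19Aux

open Stmt19Aux in
theorem stmt19 (k : ℕ) (a : ℝ → ℝ) (a₀ aInf M M' : ℝ)
    (hmeas : Measurable a) (hbd : ∀ v ∈ Set.Ioi (0 : ℝ), |a v| ≤ M)
    (h0 : Filter.Tendsto a (nhdsWithin 0 (Set.Ioi 0)) (nhds a₀))
    (hinf : Filter.Tendsto a Filter.atTop (nhds aInf))
    (hdiff : ContDiff ℝ 1 a) (hbd' : ∀ v : ℝ, |deriv a v| ≤ M') :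
    Filter.Tendsto
      (deriv (fun ξ : ℝ =>
        2 * ξ * ∫ v in Set.Ioi (0 : ℝ), a v * Real.exp (-(2 * v * ξ)) * (laguerreFn k (2 * v * ξ)) ^ 2))
      Filter.atTop (nhds 0) := by
  obtain ⟨C, hC0, hCL, hCD⟩ := laguerre_bd k
  have hM : 0 ≤ M := le_trans (abs_nonneg _) (hbd 1 (by norm_num))
  -- measurability of the integrand and of its ξ-derivative
  have hmF : ∀ ξ : ℝ, AEStronglyMeasurable
      (fun v => a v * Real.exp (-(2 * v * ξ)) * (laguerreFn k (2 * v * ξ)) ^ 2)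
      (volume.restrict (Ioi (0:ℝ))) := by
    intro ξ
    have c1 : Continuous fun v : ℝ => 2 * v * ξ := by fun_prop
    have m2 : Measurable fun v : ℝ => Real.exp (-(2 * v * ξ)) :=
      (Real.continuous_exp.comp c1.neg).measurable
    have m3 : Measurable fun v : ℝ => (laguerreFn k (2 * v * ξ)) ^ 2 :=
      (((continuous_laguerre k).comp c1).pow 2).measurable
    exact ((hmeas.mul m2).mul m3).aestronglyMeasurable
  have hmF' : ∀ ξ : ℝ, AEStronglyMeasurable (Fd k a ξ) (volume.restrict (Ioi (0:ℝ))) := by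
    intro ξ
    have c1 : Continuous fun v : ℝ => 2 * v * ξ := by fun_prop
    have c2 : Continuous fun v : ℝ => Real.exp (-(2 * v * ξ)) :=
      Real.continuous_exp.comp c1.neg
    have c3 : Continuous fun v : ℝ => laguerreFn k (2 * v * ξ) :=
      (continuous_laguerre k).comp c1
    have c4 : Continuous fun v : ℝ => lagD k (2 * v * ξ) := (continuous_lagD k).comp c1
    have c5 : Continuous fun v : ℝ =>
        Real.exp (-(2*v*ξ)) * -(2*v) * (laguerreFn k (2*v*ξ))^2
          + Real.exp (-(2*v*ξ)) * (2 * laguerreFn k (2*v*ξ) * (lagD k (2*v*ξ) * (2*v))) :=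
      ((c2.mul (by fun_prop : Continuous fun v:ℝ => -(2*v))).mul (c3.pow 2)).add
        (c2.mul ((continuous_const.mul c3).mul
          (c4.mul (by fun_prop : Continuous fun v:ℝ => 2*v))))
    exact (hmeas.mul c5.measurable).aestronglyMeasurable
  -- differentiation under the integral sign
  have main : ∀ ξ₀ : ℝ, 0 < ξ₀ → Integrable (Fd k a ξ₀) (volume.restrict (Ioi (0:ℝ))) ∧
      HasDerivAt (fun ξ => ∫ v in Ioi (0:ℝ),
        a v * Real.exp (-(2 * v * ξ)) * (laguerreFn k (2 * v * ξ)) ^ 2)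
        (∫ v in Ioi (0:ℝ), Fd k a ξ₀ v) ξ₀ := by
    intro ξ₀ hξ₀
    refine hasDerivAt_integral_of_dominated_loc_of_deriv_le
      (bound := fun v => 6*(M*C^2) * (v * Real.exp (-(ξ₀/2*v)))) (Metric.ball_mem_nhds ξ₀ (half_pos hξ₀))
      (Eventually.of_forall hmF) ?_ (hmF' ξ₀) ?_ ?_ ?_
    · refine Integrable.mono' ((integrable_exp_Ioi hξ₀).const_mul (M * C^2)) (hmF ξ₀) ?_
      refine (ae_restrict_iff' measurableSet_Ioi).2 (Eventually.of_forall fun v hv => ?_)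
      rw [Real.norm_eq_abs]
      exact bound1 k hC0 hCL (hbd v hv) hξ₀ hv
    · refine (ae_restrict_iff' measurableSet_Ioi).2 (Eventually.of_forall fun v hv => ?_)
      intro ξ hξ
      have hv' : (0:ℝ) < v := hv
      have hξ2 : ξ₀/2 < ξ := by
        have h := Metric.mem_ball.1 hξ
        rw [Real.dist_eq] at h
        have h2 := abs_lt.1 h
        linarith [h2.1]
      have hξpos : 0 < ξ := lt_trans (half_pos hξ₀) hξ2
      rw [Real.norm_eq_abs]
      refine (bound2 k hC0 hCL hCD a (hbd v hv) hξpos hv').trans ?_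
      have hee : Real.exp (-(ξ * v)) ≤ Real.exp (-(ξ₀/2 * v)) :=
        Real.exp_le_exp.2 (by nlinarith)
      exact mul_le_mul_of_nonneg_left (mul_le_mul_of_nonneg_left hee hv'.le) (by positivity)
    · exact (integrable_mul_exp_Ioi (half_pos hξ₀)).const_mul (6*(M*C^2))
    · exact Eventually.of_forall fun v => fun ξ _ => hasDerivAt_Fd k a v ξ
  -- bounds on the two pieces
  have hGbd : ∀ ξ : ℝ, 0 < ξ →
      ‖∫ v in Ioi (0:ℝ), a v * Real.exp (-(2 * v * ξ)) * (laguerreFn k (2 * v * ξ)) ^ 2‖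
        ≤ M * C^2 * (1/ξ) := by
    intro ξ hξ
    refine le_trans (norm_integral_le_of_norm_le
      ((integrable_exp_Ioi hξ).const_mul (M*C^2)) ?_) ?_
    · refine (ae_restrict_iff' measurableSet_Ioi).2 (Eventually.of_forall fun v hv => ?_)
      rw [Real.norm_eq_abs]
      exact bound1 k hC0 hCL (hbd v hv) hξ hv
    · rw [integral_const_mul, integral_exp_Ioi hξ]
  have hDbd : ∀ ξ : ℝ, 0 < ξ →
      ‖∫ v in Ioi (0:ℝ), Fd k a ξ v‖ ≤ 6*(M * C^2) * (1/ξ^2) := by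
    intro ξ hξ
    refine le_trans (norm_integral_le_of_norm_le
      ((integrable_mul_exp_Ioi hξ).const_mul (6*(M*C^2))) ?_) ?_
    · refine (ae_restrict_iff' measurableSet_Ioi).2 (Eventually.of_forall fun v hv => ?_)
      rw [Real.norm_eq_abs]
      exact bound2 k hC0 hCL hCD a (hbd v hv) hξ hv
    · rw [integral_const_mul, integral_mul_exp_Ioi hξ]
  -- the derivative of the full function
  have hderiv : ∀ ξ : ℝ, 0 < ξ →
      deriv (fun ξ : ℝ => 2 * ξ * ∫ v in Set.Ioi (0 : ℝ),
          a v * Real.exp (-(2 * v * ξ)) * (laguerreFn k (2 * v * ξ)) ^ 2) ξ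
        = 2 * (∫ v in Ioi (0:ℝ),
            a v * Real.exp (-(2 * v * ξ)) * (laguerreFn k (2 * v * ξ)) ^ 2)
          + 2 * ξ * ∫ v in Ioi (0:ℝ), Fd k a ξ v := by
    intro ξ hξ
    have hlin : HasDerivAt (fun y : ℝ => 2 * y) (2:ℝ) ξ := by
      simpa using (hasDerivAt_id ξ).const_mul (2:ℝ)
    have h' : HasDerivAt (fun y : ℝ => 2 * y * ∫ v in Ioi (0:ℝ),
          a v * Real.exp (-(2 * v * y)) * (laguerreFn k (2 * v * y)) ^ 2)
        (2 * (∫ v in Ioi (0:ℝ),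
            a v * Real.exp (-(2 * v * ξ)) * (laguerreFn k (2 * v * ξ)) ^ 2)
          + 2 * ξ * ∫ v in Ioi (0:ℝ), Fd k a ξ v) ξ := hlin.mul (main ξ hξ).2
    exact h'.deriv
  -- the limit
  have htend : Tendsto (fun ξ : ℝ =>
      2 * (∫ v in Ioi (0:ℝ),
          a v * Real.exp (-(2 * v * ξ)) * (laguerreFn k (2 * v * ξ)) ^ 2)
        + 2 * ξ * ∫ v in Ioi (0:ℝ), Fd k a ξ v) atTop (𝓝 0) := by
    have ht : Tendsto (fun ξ : ℝ => (2*(M*C^2) + 12*(M*C^2)) * (1/ξ)) atTop (𝓝 0) := by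
      have h := tendsto_inv_atTop_zero.const_mul (2*(M*C^2) + 12*(M*C^2))
      simpa [one_div] using h
    refine squeeze_zero_norm' ?_ ht
    · filter_upwards [eventually_ge_atTop (1:ℝ)] with ξ hξ1
      have hξ : (0:ℝ) < ξ := lt_of_lt_of_le one_pos hξ1
      have h1 := hGbd ξ hξ
      have h2 := hDbd ξ hξ
      have hnorm : ‖2 * (∫ v in Ioi (0:ℝ),
            a v * Real.exp (-(2 * v * ξ)) * (laguerreFn k (2 * v * ξ)) ^ 2)
          + 2 * ξ * ∫ v in Ioi (0:ℝ), Fd k a ξ v‖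
          ≤ 2 * ‖∫ v in Ioi (0:ℝ),
              a v * Real.exp (-(2 * v * ξ)) * (laguerreFn k (2 * v * ξ)) ^ 2‖
            + 2 * ξ * ‖∫ v in Ioi (0:ℝ), Fd k a ξ v‖ := by
        refine (norm_add_le _ _).trans ?_
        rw [norm_mul, norm_mul, norm_mul]
        simp [Real.norm_eq_abs, abs_of_pos hξ]
      refine hnorm.trans ?_
      have h2' : 2 * ξ * ‖∫ v in Ioi (0:ℝ), Fd k a ξ v‖
          ≤ 2 * ξ * (6*(M*C^2) * (1/ξ^2)) :=
        mul_le_mul_of_nonneg_left h2 (by positivity)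
      have heq : 2 * ξ * (6*(M*C^2) * (1/ξ^2)) = 12*(M*C^2) * (1/ξ) := by
        field_simp; ring
      nlinarith [h1, h2', heq]
  refine Tendsto.congr' ?_ htend
  filter_upwards [eventually_gt_atTop (0:ℝ)] with ξ hξ
  exact (hderiv ξ hξ).symm
end
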